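/- arXiv:2603.20924 — 8 statements merged into one kernel-verified Lean document; each statement's English description precedes it below -/
import Mathlib

section
/- For any rational q > 0 and any subset J ⊆ {1,...,n}, the principal submatrix of A(n,q) with rows and columns indexed by J is nonsingular (has nonzero determinant). -/
/-- The `q`-integer `(m)_q = 1 + q + ⋯ + q^{m-1}`. -/
def qint (q : ℚ) (m : ℕ) : ℚ := ∑ i ∈ Finset.range m, q ^ i

/-- The `q`-deformed type `A` Cartan matrix: diagonal `q+1`,
superdiagonal `-1`, subdiagonal `-q`. -/
def Aq (n : ℕ) (q : ℚ) : Matrix (Fin n) (Fin n) ℚ := fun i j =>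
  if (i : ℕ) = j then q + 1
  else if (i : ℕ) + 1 = j then -1
  else if (j : ℕ) + 1 = i then -q
  else 0

namespace AqAux

/-- ℕ-indexed version of the matrix entries. -/
def a (q : ℚ) (i j : ℕ) : ℚ :=
  if i = j then q + 1 else if i + 1 = j then -1 else if j + 1 = i then -q else 0

lemma col_sum (q : ℚ) (y : ℕ → ℚ) (m : ℕ) :
    (∑ i ∈ Finset.range (m + 1), q⁻¹ ^ i * a q i (m + 1) * y i * y (m + 1))
      = q⁻¹ ^ m * (-1) * y m * y (m + 1) := by
  rw [Finset.sum_eq_single m]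
  · have h : m ≠ m + 1 := by omega
    simp [a, h]
  · intro i hi hne
    simp only [Finset.mem_range] at hi
    have h1 : i ≠ m + 1 := by omega
    have h2 : i + 1 ≠ m + 1 := by omega
    have h3 : (m + 1) + 1 ≠ i := by omega
    simp [a, h1, h2, h3, hne]
  · intro h; simp at h

lemma row_sum (q : ℚ) (y : ℕ → ℚ) (m : ℕ) :
    (∑ j ∈ Finset.range (m + 1), q⁻¹ ^ (m + 1) * a q (m + 1) j * y (m + 1) * y j)
      = q⁻¹ ^ (m + 1) * (-q) * y (m + 1) * y m := by
  rw [Finset.sum_eq_single m]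
  · have h1 : m + 1 ≠ m := by omega
    have h2 : (m + 1) + 1 ≠ m := by omega
    simp [a, h1, h2]
  · intro j hj hne
    simp only [Finset.mem_range] at hj
    have h1 : m + 1 ≠ j := by omega
    have h2 : (m + 1) + 1 ≠ j := by omega
    have h3 : j + 1 ≠ m + 1 := by omega
    simp [a, h1, h2, h3, hne]
  · intro h; simp at h

lemma quad (q : ℚ) (hq : 0 < q) (y : ℕ → ℚ) :
    ∀ n, 1 ≤ n →
    (∑ i ∈ Finset.range n, ∑ j ∈ Finset.range n, q⁻¹ ^ i * a q i j * y i * y j)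
      = q * y 0 ^ 2 + q⁻¹ ^ (n - 1) * y (n - 1) ^ 2
        + ∑ i ∈ Finset.range (n - 1), q⁻¹ ^ i * (y i - y (i + 1)) ^ 2 := by
  have hq' : q ≠ 0 := ne_of_gt hq
  intro n hn
  induction n, hn using Nat.le_induction with
  | base =>
    simp [a]
    ring
  | succ n hn ih =>
    obtain ⟨m, rfl⟩ : ∃ m, n = m + 1 := ⟨n - 1, (Nat.succ_pred_eq_of_pos hn).symm⟩
    rw [Finset.sum_range_succ]
    conv_lhs =>
      rw [Finset.sum_congr rfl (fun i _ => Finset.sum_range_succ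
        (fun j => q⁻¹ ^ i * a q i j * y i * y j) (m + 1))]
    rw [Finset.sum_add_distrib, ih]
    simp only [Nat.add_sub_cancel]
    rw [Finset.sum_range_succ
      (fun j => q⁻¹ ^ (m + 1) * a q (m + 1) j * y (m + 1) * y j) (m + 1)]
    rw [col_sum, row_sum, Finset.sum_range_succ (fun i => q⁻¹ ^ i * (y i - y (i + 1)) ^ 2) m]
    have key : a q (m + 1) (m + 1) = q + 1 := by simp [a]
    rw [key]
    field_simp
    ring_nf
    linear_combination (q⁻¹ ^ m * y (1 + m) ^ 2 - q⁻¹ ^ m * y m * y (1 + m)) * mul_inv_cancel₀ hq'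

lemma quad_pos (q : ℚ) (hq : 0 < q) (y : ℕ → ℚ) (n : ℕ) (hn : 1 ≤ n)
    (k : ℕ) (hk : k < n) (hyk : y k ≠ 0) :
    0 < q * y 0 ^ 2 + q⁻¹ ^ (n - 1) * y (n - 1) ^ 2
        + ∑ i ∈ Finset.range (n - 1), q⁻¹ ^ i * (y i - y (i + 1)) ^ 2 := by
  have hq' : 0 < q⁻¹ := inv_pos.mpr hq
  have hA : 0 ≤ q * y 0 ^ 2 := by positivity
  have hB : 0 ≤ q⁻¹ ^ (n - 1) * y (n - 1) ^ 2 := by positivity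
  have hCt : ∀ i ∈ Finset.range (n - 1), 0 ≤ q⁻¹ ^ i * (y i - y (i + 1)) ^ 2 := by
    intro i _; positivity
  have hC : 0 ≤ ∑ i ∈ Finset.range (n - 1), q⁻¹ ^ i * (y i - y (i + 1)) ^ 2 :=
    Finset.sum_nonneg hCt
  rcases lt_or_eq_of_le (by linarith : (0:ℚ) ≤ q * y 0 ^ 2 + q⁻¹ ^ (n - 1) * y (n - 1) ^ 2
        + ∑ i ∈ Finset.range (n - 1), q⁻¹ ^ i * (y i - y (i + 1)) ^ 2) with h | h
  · exact h
  exfalso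
  have hA0 : q * y 0 ^ 2 = 0 := by linarith
  have hC0 : ∑ i ∈ Finset.range (n - 1), q⁻¹ ^ i * (y i - y (i + 1)) ^ 2 = 0 := by linarith
  have hy0 : y 0 = 0 := by
    have := mul_eq_zero.mp hA0
    rcases this with h' | h'
    · exact absurd h' (ne_of_gt hq)
    · exact pow_eq_zero_iff (n := 2) (by norm_num) |>.mp h'
  have hstep : ∀ i, i < n - 1 → y (i + 1) = y i := by
    intro i hi
    have := (Finset.sum_eq_zero_iff_of_nonneg hCt).mp hC0 i (Finset.mem_range.mpr hi)
    rcases mul_eq_zero.mp this with h' | h'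
    · exact absurd h' (ne_of_gt (pow_pos hq' i))
    · have := pow_eq_zero_iff (n := 2) (by norm_num) |>.mp h'
      linarith [sub_eq_zero.mp this]
  have hall : ∀ j, j < n → y j = 0 := by
    intro j
    induction j with
    | zero => intro _; exact hy0
    | succ j ihj =>
      intro hj
      rw [hstep j (by omega), ihj (by omega)]
  exact hyk (hall k hk)

end AqAux

theorem det_Aq_submatrix_ne_zero (n : ℕ) (q : ℚ) (hn : 1 ≤ n) (hq : 0 < q)
    (J : Finset (Fin n)) :
    ((Aq n q).submatrix (fun j : J => (j : Fin n)) (fun j : J => (j : Fin n))).det ≠ 0 := by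
  classical
  intro hdet
  rw [← Matrix.exists_mulVec_eq_zero_iff] at hdet
  obtain ⟨v, hv0, hv⟩ := hdet
  set x : Fin n → ℚ := fun i => if h : i ∈ J then v ⟨i, h⟩ else 0 with hx
  set y : ℕ → ℚ := fun i => if h : i < n then x ⟨i, h⟩ else 0 with hy
  have hrow : ∀ i : Fin n, i ∈ J → ∑ j : Fin n, Aq n q i j * x j = 0 := by
    intro i hi
    have h1 : ∑ j : Fin n, Aq n q i j * x j = ∑ j ∈ J, Aq n q i j * x j :=
      (Finset.sum_subset J.subset_univ (fun j _ hj => by simp [hx, hj])).symm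
    rw [h1, ← Finset.sum_coe_sort J (fun j => Aq n q i j * x j)]
    have h2 : ∀ j : J, Aq n q i j * x j = Aq n q i j * v j := by
      intro j
      have : x (j : Fin n) = v j := by simp [hx, j.2]
      rw [this]
    rw [Finset.sum_congr rfl (fun j _ => h2 j)]
    have h3 := congrFun hv ⟨i, hi⟩
    simpa [Matrix.mulVec, dotProduct, Matrix.submatrix_apply] using h3
  have hQ : ∑ i ∈ Finset.range n, ∑ j ∈ Finset.range n,
      q⁻¹ ^ i * AqAux.a q i j * y i * y j = 0 := by
    apply Finset.sum_eq_zero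
    intro i hi
    simp only [Finset.mem_range] at hi
    by_cases hxi : x ⟨i, hi⟩ = 0
    · apply Finset.sum_eq_zero
      intro j _
      have : y i = 0 := by simp [hy, hi, hxi]
      rw [this]; ring
    · have hiJ : (⟨i, hi⟩ : Fin n) ∈ J := by
        by_contra hn'
        exact hxi (by simp [hx, hn'])
      have hz := hrow ⟨i, hi⟩ hiJ
      have hconv : ∑ j ∈ Finset.range n, q⁻¹ ^ i * AqAux.a q i j * y i * y j
          = q⁻¹ ^ i * y i * ∑ j : Fin n, Aq n q ⟨i, hi⟩ j * x j := by
        rw [Finset.mul_sum,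
          ← Fin.sum_univ_eq_sum_range (fun j => q⁻¹ ^ i * AqAux.a q i j * y i * y j) n]
        apply Finset.sum_congr rfl
        intro j _
        have hyj : y (j : ℕ) = x j := by simp [hy, j.isLt]
        have haq : AqAux.a q i (j : ℕ) = Aq n q ⟨i, hi⟩ j := rfl
        rw [hyj, haq]; ring
      rw [hconv, hz, mul_zero]
  obtain ⟨j, hj⟩ := Function.ne_iff.mp hv0
  have hxj : x (j : Fin n) ≠ 0 := by
    have : x (j : Fin n) = v j := by simp [hx, j.2]
    rw [this]; simpa using hj
  have hyk : y ((j : Fin n) : ℕ) ≠ 0 := by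
    have : y ((j : Fin n) : ℕ) = x (j : Fin n) := by simp [hy, (j : Fin n).isLt]
    rw [this]; exact hxj
  have hpos := AqAux.quad_pos q hq y n hn ((j : Fin n) : ℕ) (j : Fin n).isLt hyk
  have heq := AqAux.quad q hq y n hn
  rw [hQ] at heq
  linarith
end

section
/- For any rational q > 0, every entry of the inverse matrix A(n,q)^{-1} is strictly positive. -/
namespace AqAux

variable (q : ℚ)

lemma qint_zero : qint q 0 = 0 := by simp [qint]

lemma qint_succ (m : ℕ) : qint q (m+1) = qint q m + q ^ m :=
  Finset.sum_range_succ _ _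

lemma qint_add (a b : ℕ) : qint q (a+b) = qint q a + q ^ a * qint q b := by
  unfold qint
  rw [Finset.sum_range_add, Finset.mul_sum]
  simp [pow_add]

lemma qint_one_add (m : ℕ) : qint q (m+1) = 1 + q * qint q m := by
  have h := qint_add q 1 m
  rw [add_comm 1 m] at h
  simpa [qint] using h

lemma hpow (m : ℕ) : q ^ m = (q - 1) * qint q m + 1 := by
  have h1 := qint_succ q m
  have h2 := qint_one_add q m
  linear_combination h2 - h1

lemma offdiag (m : ℕ) :
    (q+1) * qint q (m+1) - qint q (m+1+1) - q * qint q m = 0 := by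
  rw [qint_succ q (m+1), qint_one_add q m, pow_succ, hpow q m]
  ring

lemma diag (a b : ℕ) :
    (q+1) * qint q (a+1) * qint q (b+1) - q * qint q (a+1) * qint q b
      - q * qint q a * qint q (b+1) = qint q (a+b+2) := by
  rw [show a+b+2 = (b+1)+(a+1) by omega, qint_add q (b+1) (a+1),
      qint_succ q a, qint_succ q b, pow_succ, hpow q a, hpow q b]
  ring

lemma qint_pos (hq : 0 < q) {m : ℕ} (hm : 1 ≤ m) : 0 < qint q m := by
  apply Finset.sum_pos (fun i _ => pow_pos hq i)
  exact Finset.nonempty_range_iff.mpr (by omega)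

/-- The (1-based) entries of the inverse, up to division by `(n+1)_q`. -/
def bb (n : ℕ) (q : ℚ) (r c : ℕ) : ℚ :=
  q ^ (r - c) * qint q (min r c) * qint q (n + 1 - max r c)

lemma bb_zero (n c : ℕ) : bb n q 0 c = 0 := by
  simp [bb, qint_zero]

lemma bb_top (n c : ℕ) (hc : c ≤ n + 1) : bb n q (n+1) c = 0 := by
  unfold bb
  rw [max_eq_left hc, Nat.sub_self, qint_zero, mul_zero]

lemma bb_rec (n r c : ℕ) (hr1 : 1 ≤ r) (hrn : r ≤ n) (hc1 : 1 ≤ c) (hcn : c ≤ n) :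
    (q+1) * bb n q r c - bb n q (r+1) c - q * bb n q (r-1) c
      = if r = c then qint q (n+1) else 0 := by
  rcases lt_trichotomy r c with h | h | h
  · -- r < c
    obtain ⟨a, rfl⟩ : ∃ a, r = a + 1 := ⟨r-1, by omega⟩
    rw [if_neg (by omega)]
    unfold bb
    rw [show a+1-c = 0 by omega, show a+1+1-c = 0 by omega,
        show a+1-1 = a by omega, show a - c = 0 by omega,
        min_eq_left (by omega), min_eq_left (by omega), min_eq_left (by omega),
        max_eq_right (by omega), max_eq_right (by omega), max_eq_right (by omega)]
    linear_combination (qint q (n+1-c)) * offdiag q a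
  · -- r = c
    subst h
    rw [if_pos rfl]
    obtain ⟨a, rfl⟩ : ∃ a, r = a + 1 := ⟨r-1, by omega⟩
    obtain ⟨b, rfl⟩ : ∃ b, n = a + 1 + b := ⟨n - (a+1), by omega⟩
    unfold bb
    rw [show a+1-(a+1) = 0 by omega, show a+1+1-(a+1) = 1 by omega,
        show a+1-1 = a by omega, show a - (a+1) = 0 by omega,
        min_self, min_eq_right (by omega), min_eq_left (by omega),
        max_self, max_eq_left (by omega), max_eq_right (by omega),
        show a+1+b+1-(a+1) = b+1 by omega, show a+1+b+1-(a+1+1) = b by omega,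
        show a+1+b+1 = a+b+2 by omega]
    linear_combination diag q a b
  · -- r > c
    obtain ⟨d, rfl⟩ : ∃ d, r = c + d + 1 := ⟨r - c - 1, by omega⟩
    obtain ⟨s, rfl⟩ : ∃ s, n = c + d + 1 + s := ⟨n - (c+d+1), by omega⟩
    rw [if_neg (by omega)]
    unfold bb
    rw [show c+d+1-c = d+1 by omega, show c+d+1+1-c = d+2 by omega,
        show c+d+1-1 = c+d by omega, show c+d-c = d by omega,
        min_eq_right (by omega), min_eq_right (by omega), min_eq_right (by omega),
        max_eq_left (by omega), max_eq_left (by omega), max_eq_left (by omega),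
        show c+d+1+s+1-(c+d+1) = s+1 by omega,
        show c+d+1+s+1-(c+d+1+1) = s by omega,
        show c+d+1+s+1-(c+d) = s+1+1 by omega]
    linear_combination (q^(d+1) * qint q c) * offdiag q s

/-- The candidate inverse matrix. -/
def Bq (n : ℕ) (q : ℚ) : Matrix (Fin n) (Fin n) ℚ :=
  fun i j => bb n q ((i:ℕ)+1) ((j:ℕ)+1) / qint q (n+1)

lemma sum_ind (n m : ℕ) (g : Fin n → ℚ) :
    ∑ k : Fin n, (if (k:ℕ) = m then g k else 0)
      = if h : m < n then g ⟨m, h⟩ else 0 := by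
  split_ifs with h
  · rw [Finset.sum_eq_single (⟨m, h⟩ : Fin n)]
    · simp
    · intro k _ hk
      rw [if_neg]
      intro hkm
      exact hk (Fin.ext hkm)
    · intro hmem; exact absurd (Finset.mem_univ _) hmem
  · apply Finset.sum_eq_zero
    intro k _
    rw [if_neg]
    have := k.isLt
    omega

lemma mul_row (n : ℕ) (i : Fin n) (b : ℕ → ℚ) (hb0 : b 0 = 0)
    (hbn : b (n+1) = 0) :
    ∑ k : Fin n, Aq n q i k * b ((k:ℕ)+1)
      = (q+1) * b ((i:ℕ)+1) - b ((i:ℕ)+1+1) - q * b (i:ℕ) := by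
  have key : ∀ k : Fin n, Aq n q i k * b ((k:ℕ)+1) =
      (if (k:ℕ) = (i:ℕ) then (q+1) * b ((k:ℕ)+1) else 0)
      + (if (k:ℕ) = (i:ℕ)+1 then -(b ((k:ℕ)+1)) else 0)
      + (if (k:ℕ)+1 = (i:ℕ) then -(q * b ((k:ℕ)+1)) else 0) := by
    intro k
    unfold Aq
    split_ifs <;> first | omega | ring
  rw [Finset.sum_congr rfl (fun k _ => key k)]
  rw [Finset.sum_add_distrib, Finset.sum_add_distrib, sum_ind, sum_ind]
  have hS3 : ∑ k : Fin n, (if (k:ℕ)+1 = (i:ℕ) then -(q * b ((k:ℕ)+1)) else 0)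
      = - (q * b (i:ℕ)) := by
    by_cases hi : (i:ℕ) = 0
    · rw [Finset.sum_eq_zero (fun k _ => by rw [if_neg (by omega)])]
      rw [hi, hb0]; ring
    · have : ∀ k : Fin n, (if (k:ℕ)+1 = (i:ℕ) then -(q * b ((k:ℕ)+1)) else 0)
          = (if (k:ℕ) = (i:ℕ)-1 then -(q * b ((k:ℕ)+1)) else 0) := by
        intro k
        refine if_congr (by omega) rfl rfl
      rw [Finset.sum_congr rfl (fun k _ => this k), sum_ind]
      rw [dif_pos (by have := i.isLt; omega : (i:ℕ)-1 < n)]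
      rw [show (i:ℕ)-1+1 = (i:ℕ) by omega]
  rw [hS3]
  rw [dif_pos i.isLt]
  by_cases h2 : (i:ℕ)+1 < n
  · rw [dif_pos h2]
    ring
  · rw [dif_neg h2]
    have : (i:ℕ)+1 = n := by have := i.isLt; omega
    rw [show (i:ℕ)+1+1 = n+1 by omega, hbn]
    ring

lemma Aq_mul_Bq (n : ℕ) (hq : 0 < q) : Aq n q * Bq n q = 1 := by
  have hD : 0 < qint q (n+1) := qint_pos q hq (by omega)
  ext i j
  rw [Matrix.mul_apply]
  have hsum : ∑ k : Fin n, Aq n q i k * Bq n q k j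
      = (∑ k : Fin n, Aq n q i k * bb n q ((k:ℕ)+1) ((j:ℕ)+1)) / qint q (n+1) := by
    rw [Finset.sum_div]
    refine Finset.sum_congr rfl (fun k _ => ?_)
    rw [Bq, mul_div_assoc]
  rw [hsum, mul_row q n i (fun m => bb n q m ((j:ℕ)+1))
      (bb_zero q n _) (bb_top q n _ (by have := j.isLt; omega))]
  have hrec := bb_rec q n ((i:ℕ)+1) ((j:ℕ)+1) (by omega)
      (by have := i.isLt; omega) (by omega) (by have := j.isLt; omega)
  rw [show (i:ℕ)+1-1 = (i:ℕ) by omega] at hrec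
  rw [hrec, Matrix.one_apply]
  by_cases h : i = j
  · subst h
    rw [if_pos rfl, if_pos rfl, div_self hD.ne']
  · rw [if_neg (fun hh => h (Fin.ext (by omega))), if_neg h, zero_div]

end AqAux

theorem Aq_inv_pos (n : ℕ) (q : ℚ) (hn : 1 ≤ n) (hq : 0 < q) (i j : Fin n) :
    0 < (Aq n q)⁻¹ i j := by
  have hD : 0 < qint q (n+1) := AqAux.qint_pos q hq (by omega)
  rw [Matrix.inv_eq_right_inv (AqAux.Aq_mul_Bq q n hq)]
  unfold AqAux.Bq AqAux.bb
  apply div_pos _ hD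
  have hi := i.isLt
  have hj := j.isLt
  apply mul_pos (mul_pos (pow_pos hq _) _)
  · exact AqAux.qint_pos q hq (by omega)
  · exact AqAux.qint_pos q hq (by omega)
end

section
/- For any rational q > 0 and any subset J ⊆ {1,...,n}, every entry of the inverse of the principal submatrix A(n,q)_J (rows and columns indexed by J) is nonnegative. -/
lemma Aq_mul_decomp (n : ℕ) (q : ℚ) (i k : Fin n) (c : ℚ) :
    Aq n q i k * c =
      (if k = i then (q + 1) * c else 0)
      + (if (i : ℕ) + 1 = (k : ℕ) then -c else 0)
      + (if (k : ℕ) + 1 = (i : ℕ) then -q * c else 0) := by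
  unfold Aq
  simp only [Fin.ext_iff]
  split_ifs <;> first
    | ring1
    | (exfalso; omega)

lemma Aq_monotone (n : ℕ) (q : ℚ) (hq : 0 < q) (J : Finset (Fin n))
    (x : J → ℚ)
    (hx : ∀ i : J, 0 ≤ (((Aq n q).submatrix (fun a : J => (a : Fin n))
      (fun a : J => (a : Fin n))).mulVec x) i) :
    ∀ i : J, 0 ≤ x i := by
  by_contra hc
  push_neg at hc
  obtain ⟨i, hi⟩ := hc
  obtain ⟨i₀, -, hmin⟩ := Finset.exists_min_image Finset.univ x ⟨i, Finset.mem_univ i⟩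
  set m := x i₀ with hm
  have hminall : ∀ j : J, m ≤ x j := fun j => hmin j (Finset.mem_univ j)
  have hmneg : m < 0 := lt_of_le_of_lt (hminall i) hi
  obtain ⟨i₁, hi₁S, hmax⟩ := Finset.exists_max_image
    (Finset.univ.filter (fun j : J => x j = m)) (fun j => ((j : Fin n) : ℕ))
    ⟨i₀, by simp [hm]⟩
  have hxi₁ : x i₁ = m := (Finset.mem_filter.mp hi₁S).2
  have hmax' : ∀ j : J, x j = m → ((j : Fin n) : ℕ) ≤ ((i₁ : Fin n) : ℕ) := by
    intro j hj
    exact hmax j (Finset.mem_filter.mpr ⟨Finset.mem_univ j, hj⟩)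
  have key := hx i₁
  simp only [Matrix.mulVec, dotProduct, Matrix.submatrix_apply] at key
  have hdecomp : ∑ j : J, Aq n q (i₁ : Fin n) (j : Fin n) * x j
      = (∑ j : J, if j = i₁ then (q + 1) * x j else 0)
      + (∑ j : J, if ((i₁ : Fin n) : ℕ) + 1 = ((j : Fin n) : ℕ) then -(x j) else 0)
      + (∑ j : J, if ((j : Fin n) : ℕ) + 1 = ((i₁ : Fin n) : ℕ) then -q * x j else 0) := by
    rw [← Finset.sum_add_distrib, ← Finset.sum_add_distrib]
    refine Finset.sum_congr rfl fun j _ => ?_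
    rw [Aq_mul_decomp]
    congr 2
    simp only [Subtype.ext_iff]
  rw [hdecomp] at key
  have hS1 : (∑ j : J, if j = i₁ then (q + 1) * x j else 0) = (q + 1) * m := by
    rw [Finset.sum_ite_eq' Finset.univ i₁]
    simp [hxi₁]
  rw [hS1] at key
  -- bound on the subdiagonal sum
  have hS3 : (∑ j : J, if ((j : Fin n) : ℕ) + 1 = ((i₁ : Fin n) : ℕ) then -q * x j else 0)
      ≤ -(q * m) := by
    by_cases h : ∃ jm : J, ((jm : Fin n) : ℕ) + 1 = ((i₁ : Fin n) : ℕ)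
    · obtain ⟨jm, hjm⟩ := h
      have heq : ∀ j : J, (if ((j : Fin n) : ℕ) + 1 = ((i₁ : Fin n) : ℕ) then -q * x j else 0)
          = (if j = jm then -q * x jm else 0) := by
        intro j
        by_cases hjj : j = jm
        · subst hjj; simp [hjm]
        · rw [if_neg hjj, if_neg]
          intro hcond
          exact hjj (Subtype.ext (Fin.ext (by omega)))
      rw [Finset.sum_congr rfl (fun j _ => heq j), Finset.sum_ite_eq' Finset.univ jm]
      simp only [Finset.mem_univ, if_true]
      have := hminall jm
      nlinarith
    · push_neg at h
      have heq : ∀ j : J, (if ((j : Fin n) : ℕ) + 1 = ((i₁ : Fin n) : ℕ) then -q * x j else 0) = 0 := by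
        intro j; rw [if_neg (h j)]
      rw [Finset.sum_congr rfl (fun j _ => heq j)]
      simp
      nlinarith
  by_cases h2 : ∃ jp : J, ((i₁ : Fin n) : ℕ) + 1 = ((jp : Fin n) : ℕ)
  · obtain ⟨jp, hjp⟩ := h2
    have hS2 : (∑ j : J, if ((i₁ : Fin n) : ℕ) + 1 = ((j : Fin n) : ℕ) then -(x j) else 0)
        = -(x jp) := by
      have heq : ∀ j : J, (if ((i₁ : Fin n) : ℕ) + 1 = ((j : Fin n) : ℕ) then -(x j) else 0)
          = (if j = jp then -(x jp) else 0) := by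
        intro j
        by_cases hjj : j = jp
        · subst hjj; simp [hjp]
        · rw [if_neg hjj, if_neg]
          intro hcond
          exact hjj (Subtype.ext (Fin.ext (by omega)))
      rw [Finset.sum_congr rfl (fun j _ => heq j), Finset.sum_ite_eq' Finset.univ jp]
      simp
    rw [hS2] at key
    have hstrict : m < x jp := by
      rcases lt_or_eq_of_le (hminall jp) with h' | h'
      · exact h'
      · exfalso
        have := hmax' jp h'.symm
        omega
    nlinarith
  · push_neg at h2
    have hS2 : (∑ j : J, if ((i₁ : Fin n) : ℕ) + 1 = ((j : Fin n) : ℕ) then -(x j) else 0) = 0 := by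
      have heq : ∀ j : J, (if ((i₁ : Fin n) : ℕ) + 1 = ((j : Fin n) : ℕ) then -(x j) else 0) = 0 := by
        intro j; rw [if_neg (h2 j)]
      rw [Finset.sum_congr rfl (fun j _ => heq j)]
      simp
    rw [hS2] at key
    nlinarith

theorem Aq_submatrix_inv_nonneg (n : ℕ) (q : ℚ) (hn : 1 ≤ n) (hq : 0 < q)
    (J : Finset (Fin n)) (i j : J) :
    0 ≤ ((Aq n q).submatrix (fun a : J => (a : Fin n)) (fun a : J => (a : Fin n)))⁻¹ i j := by
  set B := (Aq n q).submatrix (fun a : J => (a : Fin n)) (fun a : J => (a : Fin n)) with hB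
  have hmono : ∀ x : J → ℚ, (∀ i : J, 0 ≤ B.mulVec x i) → ∀ i : J, 0 ≤ x i :=
    fun x hx => Aq_monotone n q hq J x hx
  have hdet : B.det ≠ 0 := by
    intro h
    obtain ⟨v, hv0, hv⟩ := Matrix.exists_mulVec_eq_zero_iff.mpr h
    have h1 : ∀ k : J, 0 ≤ v k := hmono v (by intro k; rw [hv]; exact le_refl 0)
    have h2 : ∀ k : J, 0 ≤ (-v) k := hmono (-v) (by
      intro k; rw [Matrix.mulVec_neg, hv]; simp)
    exact hv0 (funext fun k => le_antisymm (by simpa using h2 k) (h1 k))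
  have hmul : B * B⁻¹ = 1 := Matrix.mul_nonsing_inv B (isUnit_iff_ne_zero.mpr hdet)
  set c : J → ℚ := fun k => B⁻¹ k j with hc
  have hvec : B.mulVec c = fun k => (B * B⁻¹) k j := by
    funext k
    simp [Matrix.mulVec, dotProduct, Matrix.mul_apply, hc]
  have hpos : ∀ k : J, 0 ≤ B.mulVec c k := by
    intro k
    have hk : B.mulVec c k = (B * B⁻¹) k j := congrFun hvec k
    rw [hk, hmul, Matrix.one_apply]
    split_ifs <;> norm_num
  exact hmono c hpos i
end

section
/- In the q-Klyachko algebra Kly_{n,q}, for each generator u_i the element u_i^2 can be rewritten as (u_i u_{i+1} + q u_i u_{i-1})/(q+1); consequently every element of Kly_{n,q} is a Q-linear combination of square-free monomials in u_1, ..., u_n. -/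
open MvPolynomial in
/-- `klyGen n q k` is `X_{k-1}` (the `k`-th generator, 1-indexed) when `1 ≤ k ≤ n`,
and `0` otherwise (the convention `u_0 = u_{n+1} = 0`). -/
noncomputable def klyGen (n : ℕ) (q : ℚ) (k : ℕ) : MvPolynomial (Fin n) ℚ :=
  if h : 1 ≤ k ∧ k ≤ n then X ⟨k - 1, by omega⟩ else 0

/-- The ideal of `q`-Klyachko relations `(q+1)u_i² - u_i u_{i+1} - q u_i u_{i-1}`. -/
noncomputable def klyIdeal (n : ℕ) (q : ℚ) : Ideal (MvPolynomial (Fin n) ℚ) :=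
  Ideal.span ((fun i => (q + 1) • klyGen n q i ^ 2 - klyGen n q i * klyGen n q (i + 1)
      - q • (klyGen n q i * klyGen n q (i - 1))) '' (Set.Icc 1 n))

/-- The `q`-Klyachko algebra `Kly_{n,q}`. -/
noncomputable def Kly (n : ℕ) (q : ℚ) : Type :=
  MvPolynomial (Fin n) ℚ ⧸ klyIdeal n q

noncomputable instance (n : ℕ) (q : ℚ) : CommRing (Kly n q) :=
  Ideal.Quotient.commRing _

noncomputable instance (n : ℕ) (q : ℚ) : Algebra ℚ (Kly n q) :=
  Ideal.Quotient.algebra _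

/-- The class of the generator `u_k` (1-indexed) in `Kly_{n,q}`. -/
noncomputable def klyU (n : ℕ) (q : ℚ) (k : ℕ) : Kly n q :=
  Ideal.Quotient.mk (klyIdeal n q) (klyGen n q k)

open MvPolynomial

namespace KlyAux

variable {n : ℕ}

/-- The monomial with exponent vector `σ`. -/
noncomputable def P (n : ℕ) (σ : Fin n → ℕ) : MvPolynomial (Fin n) ℚ := ∏ i, X i ^ σ i

lemma P_add (σ τ : Fin n → ℕ) : P n (fun i => σ i + τ i) = P n σ * P n τ := by
  simp [P, pow_add, Finset.prod_mul_distrib]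

lemma P_single (a : Fin n) (k : ℕ) :
    P n (fun i => if i = a then k else 0) = X a ^ k := by
  rw [P]
  rw [Finset.prod_congr rfl (fun i _ => ?_), Finset.prod_ite_eq' Finset.univ a (fun i => X i ^ k)]
  · simp
  · split_ifs <;> simp

/-- `σ` with two copies of `j` removed. -/
def core (σ : Fin n → ℕ) (j : Fin n) : Fin n → ℕ := fun i => σ i - (if i = j then 2 else 0)

/-- `σ` with one copy of `a` replaced by a copy of `b`. -/
def mv (σ : Fin n → ℕ) (a b : Fin n) : Fin n → ℕ :=
  fun i => σ i - (if i = a then 1 else 0) + (if i = b then 1 else 0)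

lemma core_decomp {σ : Fin n → ℕ} {j : Fin n} (hj : 2 ≤ σ j) :
    σ = fun i => core σ j i + (if i = j then 2 else 0) := by
  funext i
  by_cases h : i = j <;> simp [core, h] <;> omega

lemma mv_decomp {σ : Fin n → ℕ} {j b : Fin n} (hj : 2 ≤ σ j) (hb : b ≠ j) :
    mv σ j b = fun i => core σ j i + ((if i = j then 1 else 0) + (if i = b then 1 else 0)) := by
  funext i
  simp only [mv, core]
  split_ifs with h1 h2 <;> try omega
  all_goals simp_all

lemma P_core {σ : Fin n → ℕ} {j : Fin n} (hj : 2 ≤ σ j) :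
    P n σ = P n (core σ j) * X j ^ 2 := by
  conv_lhs => rw [core_decomp hj]
  rw [P_add, P_single]

lemma P_mv {σ : Fin n → ℕ} {j b : Fin n} (hj : 2 ≤ σ j) (hb : b ≠ j) :
    P n (mv σ j b) = P n (core σ j) * (X j * X b) := by
  rw [mv_decomp hj hb, P_add, P_add, P_single, P_single, pow_one, pow_one]

lemma sum_mul_core {σ : Fin n → ℕ} {j : Fin n} (g : Fin n → ℕ) (hj : 2 ≤ σ j) :
    ∑ i, σ i * g i = (∑ i, core σ j i * g i) + 2 * g j := by
  conv_lhs => rw [core_decomp hj]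
  simp only [add_mul, Finset.sum_add_distrib, ite_mul, zero_mul]
  rw [Finset.sum_ite_eq' Finset.univ j (fun i => 2 * g i)]
  simp

lemma sum_mul_mv {σ : Fin n → ℕ} {j b : Fin n} (g : Fin n → ℕ) (hj : 2 ≤ σ j) (hb : b ≠ j) :
    ∑ i, mv σ j b i * g i = (∑ i, core σ j i * g i) + (g j + g b) := by
  rw [mv_decomp hj hb]
  simp only [add_mul, Finset.sum_add_distrib, ite_mul, zero_mul, one_mul]
  rw [Finset.sum_ite_eq' Finset.univ j (fun i => g i),
    Finset.sum_ite_eq' Finset.univ b (fun i => g i)]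
  simp [add_assoc]

lemma klyGen_of_le {q : ℚ} {k : ℕ} (h1 : 1 ≤ k) (h2 : k ≤ n) :
    klyGen n q k = X ⟨k - 1, by omega⟩ := by
  rw [klyGen, dif_pos ⟨h1, h2⟩]

lemma klyGen_of_not {q : ℚ} {k : ℕ} (h : ¬ (1 ≤ k ∧ k ≤ n)) :
    klyGen n q k = 0 := by
  rw [klyGen, dif_neg h]

lemma gen_mem (q : ℚ) (j : Fin n) :
    (q + 1) • (X j ^ 2 : MvPolynomial (Fin n) ℚ) - X j * klyGen n q (j.1 + 2)
      - q • (X j * klyGen n q j.1) ∈ klyIdeal n q := by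
  have hj2 := j.2
  have h1 : klyGen n q (j.1 + 1) = X j := by
    rw [klyGen_of_le (by omega) (by omega)]
    congr 1
  apply Ideal.subset_span
  refine ⟨j.1 + 1, ⟨by omega, by omega⟩, ?_⟩
  simp only [Nat.add_sub_cancel, h1]

end KlyAux

namespace KlyAux

variable {n : ℕ} {q : ℚ}

lemma sf_mem (q : ℚ) (σ : Fin n → ℕ) (hσ : ∀ i, σ i ≤ 1) :
    Ideal.Quotient.mk (klyIdeal n q) (P n σ) ∈
      Submodule.span ℚ (Set.range fun S : Finset (Fin n) =>
        Ideal.Quotient.mk (klyIdeal n q) (∏ i ∈ S, X i)) := by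
  have hP : P n σ = ∏ i ∈ Finset.univ.filter (fun i => σ i = 1), X i := by
    rw [Finset.prod_filter, P]
    refine Finset.prod_congr rfl fun i _ => ?_
    rcases Nat.le_one_iff_eq_zero_or_eq_one.mp (hσ i) with h | h <;> simp [h]
  rw [hP]
  exact Submodule.subset_span ⟨_, rfl⟩

set_option synthInstance.maxHeartbeats 1000000 in
set_option maxHeartbeats 1600000 in
lemma key (hq : 0 < q) (σ0 : Fin n → ℕ) :
    Ideal.Quotient.mk (klyIdeal n q) (P n σ0) ∈
      Submodule.span ℚ (Set.range fun S : Finset (Fin n) =>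
        Ideal.Quotient.mk (klyIdeal n q) (∏ i ∈ S, X i)) := by
  set T := Submodule.span ℚ (Set.range fun S : Finset (Fin n) =>
    Ideal.Quotient.mk (klyIdeal n q) (∏ i ∈ S, X i)) with hT
  set d := ∑ i, σ0 i with hd
  suffices h : ∀ σ : Fin n → ℕ, (∑ i, σ i = d) → Ideal.Quotient.mk (klyIdeal n q) (P n σ) ∈ T by
    exact h σ0 rfl
  intro σ hσ
  rw [← Submodule.Quotient.mk_eq_zero T]
  rw [← Module.forall_dual_apply_eq_zero_iff ℚ]
  intro φ
  set ψ : MvPolynomial (Fin n) ℚ →ₗ[ℚ] ℚ :=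
    φ ∘ₗ (T.mkQ ∘ₗ (Ideal.Quotient.mkₐ ℚ (klyIdeal n q)).toLinearMap) with hψ
  show ψ (P n σ) = 0
  -- basic facts about ψ
  have hI : ∀ r ∈ klyIdeal n q, ψ r = 0 := by
    intro r hr
    have : Ideal.Quotient.mkₐ ℚ (klyIdeal n q) r = 0 := by
      rw [Ideal.Quotient.mkₐ_eq_mk]
      exact Ideal.Quotient.eq_zero_iff_mem.mpr hr
    simp [hψ, this, Ideal.Quotient.eq_zero_iff_mem.mpr hr]
  have hsf : ∀ τ : Fin n → ℕ, (∀ i, τ i ≤ 1) → ψ (P n τ) = 0 := by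
    intro τ hτ
    have h2 : T.mkQ (Ideal.Quotient.mkₐ ℚ (klyIdeal n q) (P n τ)) = 0 := by
      rw [Ideal.Quotient.mkₐ_eq_mk, Submodule.mkQ_apply, Submodule.Quotient.mk_eq_zero]
      exact sf_mem q τ hτ
    show φ (T.mkQ (Ideal.Quotient.mkₐ ℚ (klyIdeal n q) (P n τ))) = 0
    rw [h2, map_zero]
  -- the main relation
  have heq : ∀ (τ : Fin n → ℕ) (j : Fin n), 2 ≤ τ j →
      (q + 1) * ψ (P n τ) =
        (if h : j.1 + 1 < n then ψ (P n (mv τ j ⟨j.1 + 1, h⟩)) else 0)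
        + q * (if h : 0 < j.1 then
            ψ (P n (mv τ j ⟨j.1 - 1, Nat.lt_of_le_of_lt (Nat.sub_le j.1 1) j.2⟩)) else 0) := by
    intro τ j hj
    have h0 := hI _ (Ideal.mul_mem_left _ (P n (core τ j)) (gen_mem q j))
    have hexp : P n (core τ j) * ((q + 1) • (X j ^ 2 : MvPolynomial (Fin n) ℚ)
          - X j * klyGen n q (j.1 + 2) - q • (X j * klyGen n q j.1))
        = (q + 1) • P n τ - P n (core τ j) * (X j * klyGen n q (j.1 + 2))
          - q • (P n (core τ j) * (X j * klyGen n q j.1)) := by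
      rw [P_core hj]
      simp only [smul_eq_C_mul]
      ring
    rw [hexp] at h0
    simp only [map_sub, map_smul, smul_eq_mul] at h0
    have hA : ψ (P n (core τ j) * (X j * klyGen n q (j.1 + 2)))
        = (if h : j.1 + 1 < n then ψ (P n (mv τ j ⟨j.1 + 1, h⟩)) else 0) := by
      by_cases h : j.1 + 1 < n
      · rw [dif_pos h, klyGen_of_le (k := j.1 + 2) (by omega) (by omega),
          P_mv hj (b := ⟨j.1 + 1, h⟩) (Fin.ne_of_val_ne (by simp only [Fin.val_mk]; omega))]
        rfl
      · rw [dif_neg h, klyGen_of_not (by omega), mul_zero, mul_zero, map_zero]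
    have hB : ψ (P n (core τ j) * (X j * klyGen n q j.1))
        = (if h : 0 < j.1 then
            ψ (P n (mv τ j ⟨j.1 - 1, Nat.lt_of_le_of_lt (Nat.sub_le j.1 1) j.2⟩)) else 0) := by
      by_cases h : 0 < j.1
      · rw [dif_pos h, klyGen_of_le (k := j.1) (by omega) (by have := j.2; omega),
          P_mv hj (b := ⟨j.1 - 1, Nat.lt_of_le_of_lt (Nat.sub_le j.1 1) j.2⟩)
            (Fin.ne_of_val_ne (by simp only [Fin.val_mk]; omega))]
      · rw [dif_neg h, klyGen_of_not (by omega), mul_zero, mul_zero, map_zero]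
    rw [hA, hB] at h0
    linarith
  -- finiteness of the set of exponent vectors of degree d
  have hA : {τ : Fin n → ℕ | ∑ i, τ i = d}.Finite := by
    apply Set.Finite.subset (Set.Finite.pi (fun i : Fin n => Set.finite_Icc 0 d))
    intro τ hτ
    rw [Set.mem_univ_pi]
    intro i
    simp only [Set.mem_Icc]
    refine ⟨Nat.zero_le _, ?_⟩
    have := Finset.single_le_sum (f := τ) (fun i _ => Nat.zero_le (τ i)) (Finset.mem_univ i)
    have hτ' : ∑ i, τ i = d := hτ
    omega
  -- maximum principle
  by_contra hc0
  have hexists : ∃ σ1 ∈ hA.toFinset, ψ (P n σ1) ≠ 0 := by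
    exact ⟨σ, by simpa [Set.Finite.mem_toFinset] using hσ, hc0⟩
  obtain ⟨σ1, hσ1F, hσ1⟩ := hexists
  obtain ⟨σm, hmF, hmax⟩ :=
    hA.toFinset.exists_max_image (fun τ => |ψ (P n τ)|) ⟨σ1, hσ1F⟩
  set t := |ψ (P n σm)| with htdef
  have ht : 0 < t := lt_of_lt_of_le (abs_pos.mpr hσ1) (hmax σ1 hσ1F)
  set B := hA.toFinset.filter (fun τ => |ψ (P n τ)| = t) with hB
  obtain ⟨σs, hsB, hRmax⟩ :=
    B.exists_max_image (fun τ => ∑ i, τ i * i.1) ⟨σm, by simp [hB, hmF, htdef]⟩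
  have hsF : σs ∈ hA.toFinset := (Finset.mem_filter.mp hsB).1
  have hst : |ψ (P n σs)| = t := (Finset.mem_filter.mp hsB).2
  have hsd : ∑ i, σs i = d := by simpa [Set.Finite.mem_toFinset] using hsF
  -- σs is not squarefree
  have hj : ∃ j, 2 ≤ σs j := by
    by_contra h
    push_neg at h
    have := hsf σs (fun i => by have := h i; omega)
    rw [this] at hst
    simp at hst
    linarith
  obtain ⟨j, hj⟩ := hj
  have heqs := heq σs j hj
  -- both moved monomials (when alive) stay in degree d, hence are bounded by t
  have hbound : ∀ b : Fin n, b ≠ j → |ψ (P n (mv σs j b))| ≤ t := by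
    intro b hb
    apply hmax
    rw [Set.Finite.mem_toFinset]
    have e1 := sum_mul_core (σ := σs) (fun _ => 1) hj
    have e2 := sum_mul_mv (σ := σs) (b := b) (fun _ => 1) hj hb
    beta_reduce at e1 e2
    simp only [mul_one] at e1 e2
    show ∑ i, mv σs j b i = d
    omega
  -- the minus term is bounded by t
  have hm_le : (if h : 0 < j.1 then
      |ψ (P n (mv σs j ⟨j.1 - 1, Nat.lt_of_le_of_lt (Nat.sub_le j.1 1) j.2⟩))| else 0) ≤ t := by
    by_cases h : 0 < j.1
    · rw [dif_pos h]
      exact hbound _ (Fin.ne_of_val_ne (by simp only [Fin.val_mk]; omega))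
    · rw [dif_neg h]
      linarith
  have hp_le : (if h : j.1 + 1 < n then |ψ (P n (mv σs j ⟨j.1 + 1, h⟩))| else 0) ≤ t := by
    by_cases h : j.1 + 1 < n
    · rw [dif_pos h]
      exact hbound _ (Fin.ne_of_val_ne (by simp only [Fin.val_mk]; omega))
    · rw [dif_neg h]
      linarith
  -- derive that the plus term has absolute value ≥ t (hence = t and alive)
  have habs : (q + 1) * t ≤
      (if h : j.1 + 1 < n then |ψ (P n (mv σs j ⟨j.1 + 1, h⟩))| else 0)
      + q * (if h : 0 < j.1 then
          |ψ (P n (mv σs j ⟨j.1 - 1, Nat.lt_of_le_of_lt (Nat.sub_le j.1 1) j.2⟩))| else 0) := by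
    have h1 : (q + 1) * t = |(q + 1) * ψ (P n σs)| := by
      rw [abs_mul, hst, abs_of_pos (by linarith : (0:ℚ) < q + 1)]
    rw [h1, heqs]
    calc |(if h : j.1 + 1 < n then ψ (P n (mv σs j ⟨j.1 + 1, h⟩)) else 0)
        + q * (if h : 0 < j.1 then
            ψ (P n (mv σs j ⟨j.1 - 1, Nat.lt_of_le_of_lt (Nat.sub_le j.1 1) j.2⟩)) else 0)|
        ≤ |(if h : j.1 + 1 < n then ψ (P n (mv σs j ⟨j.1 + 1, h⟩)) else 0)|
          + |q * (if h : 0 < j.1 then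
            ψ (P n (mv σs j ⟨j.1 - 1, Nat.lt_of_le_of_lt (Nat.sub_le j.1 1) j.2⟩)) else 0)| :=
          abs_add_le _ _
      _ = (if h : j.1 + 1 < n then |ψ (P n (mv σs j ⟨j.1 + 1, h⟩))| else 0)
          + q * (if h : 0 < j.1 then
            |ψ (P n (mv σs j ⟨j.1 - 1, Nat.lt_of_le_of_lt (Nat.sub_le j.1 1) j.2⟩))| else 0) := by
          rw [abs_mul, abs_of_pos hq]
          congr 1
          · split_ifs <;> simp
          · congr 1
            split_ifs <;> simp
  have hp_ge : t ≤ (if h : j.1 + 1 < n then |ψ (P n (mv σs j ⟨j.1 + 1, h⟩))| else 0) := by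
    have hmm := mul_le_mul_of_nonneg_left hm_le (le_of_lt hq)
    linarith
  -- hence the plus move is alive and achieves the maximum
  have halive : j.1 + 1 < n := by
    by_contra h
    rw [dif_neg h] at hp_ge
    linarith
  rw [dif_pos halive] at hp_ge
  set σp := mv σs j ⟨j.1 + 1, halive⟩ with hσp
  have hpt : |ψ (P n σp)| = t :=
    le_antisymm (hbound _ (Fin.ne_of_val_ne (by simp only [Fin.val_mk]; omega))) hp_ge
  have hpF : σp ∈ hA.toFinset := by
    rw [Set.Finite.mem_toFinset]
    have e1 := sum_mul_core (σ := σs) (fun _ => 1) hj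
    have e2 := sum_mul_mv (σ := σs) (b := ⟨j.1 + 1, halive⟩) (fun _ => 1) hj
      (Fin.ne_of_val_ne (by simp only [Fin.val_mk]; omega))
    beta_reduce at e1 e2
    simp only [mul_one] at e1 e2
    show ∑ i, σp i = d
    rw [hσp]
    omega
  have hpB : σp ∈ B := Finset.mem_filter.mpr ⟨hpF, hpt⟩
  have hR := hRmax σp hpB
  -- but σp has strictly larger weighted sum, contradiction
  have e1 := sum_mul_core (σ := σs) (fun i => i.1) hj
  have e2 := sum_mul_mv (σ := σs) (b := ⟨j.1 + 1, halive⟩) (fun i => i.1) hj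
    (Fin.ne_of_val_ne (by simp only [Fin.val_mk]; omega))
  rw [hσp] at hR
  beta_reduce at e1 e2 hR
  simp only [Fin.val_mk] at e1 e2 hR
  omega

end KlyAux

lemma KlyAux.mono_eq {n : ℕ} (v : Fin n →₀ ℕ) :
    (monomial v (1 : ℚ) : MvPolynomial (Fin n) ℚ) = KlyAux.P n ⇑v := by
  rw [monomial_eq, C_1, one_mul, KlyAux.P]
  exact Finsupp.prod_fintype _ _ (fun i => pow_zero _)

open KlyAux in
set_option maxHeartbeats 800000 in
set_option synthInstance.maxHeartbeats 400000 in
theorem kly_squares_and_squarefree_span (n : ℕ) (q : ℚ) (hn : 1 ≤ n) (hq : 0 < q) :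
    (∀ i ∈ Set.Icc 1 n,
      klyU n q i ^ 2 =
        ((q + 1)⁻¹ : ℚ) • (klyU n q i * klyU n q (i + 1) + q • (klyU n q i * klyU n q (i - 1)))) ∧
    Submodule.span ℚ
      (Set.range fun S : Finset (Fin n) =>
        Ideal.Quotient.mk (klyIdeal n q) (∏ i ∈ S, X i)) = ⊤ := by
  constructor
  · intro i hi
    obtain ⟨hi1, hi2⟩ := hi
    have hne : (q + 1) ≠ 0 := by linarith
    have hmem : (q + 1) • klyGen n q i ^ 2 - klyGen n q i * klyGen n q (i + 1)
        - q • (klyGen n q i * klyGen n q (i - 1)) ∈ klyIdeal n q :=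
      Ideal.subset_span ⟨i, ⟨hi1, hi2⟩, rfl⟩
    have h0 : Ideal.Quotient.mkₐ ℚ (klyIdeal n q) ((q + 1) • klyGen n q i ^ 2
        - klyGen n q i * klyGen n q (i + 1)
        - q • (klyGen n q i * klyGen n q (i - 1))) = 0 := by
      rw [Ideal.Quotient.mkₐ_eq_mk]
      exact Ideal.Quotient.eq_zero_iff_mem.mpr hmem
    simp only [map_sub, map_smul, map_mul, map_pow, Ideal.Quotient.mkₐ_eq_mk] at h0
    rw [sub_sub, sub_eq_zero] at h0
    have h1 : (q + 1) • klyU n q i ^ 2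
        = klyU n q i * klyU n q (i + 1) + q • (klyU n q i * klyU n q (i - 1)) := h0
    rw [← h1, smul_smul, inv_mul_cancel₀ hne, one_smul]
  · rw [Submodule.eq_top_iff']
    intro x
    obtain ⟨p, rfl⟩ := Ideal.Quotient.mk_surjective x
    rw [← p.support_sum_monomial_coeff, map_sum]
    apply Submodule.sum_mem
    intro v hv
    have h2 : (Ideal.Quotient.mk (klyIdeal n q)) (monomial v (coeff v p))
        = (coeff v p) • (Ideal.Quotient.mk (klyIdeal n q)) (P n ⇑v) := by
      rw [← mono_eq, ← Ideal.Quotient.mkₐ_eq_mk (R₁ := ℚ), ← map_smul, smul_monomial,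
        smul_eq_mul, mul_one]
    rw [h2]
    exact Submodule.smul_mem _ _ (key hq ⇑v)
end

section
/- The matrix A(n,q) is an M-matrix in the weak sense: it has nonpositive off-diagonal entries and all its principal minors are positive for q > 0. -/
open Finset Matrix

/-- Symmetrized entries. -/
noncomputable def sR (q r : ℝ) (i j : ℕ) : ℝ :=
  if i = j then q + 1 else if i + 1 = j then -r else if j + 1 = i then -r else 0

lemma offdiag_sum (N : ℕ) (F : ℕ → ℕ → ℝ) :
    ∑ i ∈ Finset.range N, ∑ j ∈ Finset.range N, (if i + 1 = j then F i j else 0)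
      = ∑ i ∈ Finset.range (N - 1), F i (i + 1) := by
  have e1 : ∀ i ∈ Finset.range N,
      ∑ j ∈ Finset.range N, (if i + 1 = j then F i j else 0)
        = if i + 1 ∈ Finset.range N then F i (i + 1) else 0 := fun i _ =>
    Finset.sum_ite_eq _ _ _
  rw [Finset.sum_congr rfl e1,
    ← Finset.sum_subset (Finset.range_subset_range.2 (Nat.sub_le N 1))]
  · refine Finset.sum_congr rfl fun i hi => ?_
    rw [if_pos]
    simp only [Finset.mem_range] at hi ⊢
    omega
  · intro i hi hni
    simp only [Finset.mem_range] at hi hni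
    rw [if_neg]
    simp only [Finset.mem_range]
    omega

lemma lemA (q r : ℝ) (N : ℕ) (X : ℕ → ℝ) :
    ∑ i ∈ Finset.range N, ∑ j ∈ Finset.range N, X i * sR q r i j * X j
      = (q + 1) * ∑ i ∈ Finset.range N, X i ^ 2
        - 2 * r * ∑ i ∈ Finset.range (N - 1), (X i * X (i + 1)) := by
  have hpt : ∀ i j : ℕ, X i * sR q r i j * X j
      = (if i = j then (q + 1) * (X i * X j) else 0)
        + ((if i + 1 = j then -r * (X i * X j) else 0)
        + (if j + 1 = i then -r * (X i * X j) else 0)) := by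
    intro i j
    unfold sR
    split_ifs <;> first | ring1 | (exfalso; omega)
  simp_rw [hpt, Finset.sum_add_distrib]
  have h1 : ∑ i ∈ Finset.range N, ∑ j ∈ Finset.range N,
      (if i = j then (q + 1) * (X i * X j) else 0)
        = (q + 1) * ∑ i ∈ Finset.range N, X i ^ 2 := by
    rw [Finset.mul_sum]
    refine Finset.sum_congr rfl fun i hi => ?_
    rw [Finset.sum_ite_eq _ i (fun j => (q + 1) * (X i * X j)), if_pos hi]
    ring
  have h2 : ∑ i ∈ Finset.range N, ∑ j ∈ Finset.range N,
      (if i + 1 = j then -r * (X i * X j) else 0)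
        = ∑ i ∈ Finset.range (N - 1), -r * (X i * X (i + 1)) :=
    offdiag_sum N fun i j => -r * (X i * X j)
  have h3 : ∑ i ∈ Finset.range N, ∑ j ∈ Finset.range N,
      (if j + 1 = i then -r * (X i * X j) else 0)
        = ∑ i ∈ Finset.range (N - 1), -r * (X (i + 1) * X i) := by
    rw [Finset.sum_comm]
    exact offdiag_sum N fun j i => -r * (X i * X j)
  have h4 : ∑ i ∈ Finset.range (N - 1), -r * (X (i + 1) * X i)
      = ∑ i ∈ Finset.range (N - 1), -r * (X i * X (i + 1)) :=
    Finset.sum_congr rfl fun i _ => by ring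
  rw [h1, h2, h3, h4, ← Finset.mul_sum]
  ring

lemma lemB (q r : ℝ) (hr : r ^ 2 = q) (m : ℕ) (X : ℕ → ℝ) :
    (q + 1) * ∑ i ∈ Finset.range (m + 1), X i ^ 2
        - 2 * r * ∑ i ∈ Finset.range m, (X i * X (i + 1))
      = ∑ k ∈ Finset.range m, (X k - r * X (k + 1)) ^ 2 + q * X 0 ^ 2 + X m ^ 2 := by
  induction m with
  | zero => simp [Finset.sum_range_one]; ring
  | succ m ih =>
      rw [Finset.sum_range_succ (fun i => X i ^ 2) (m + 1),
        Finset.sum_range_succ (fun i => X i * X (i + 1)) m,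
        Finset.sum_range_succ (fun k => (X k - r * X (k + 1)) ^ 2) m]
      linear_combination ih - X (m + 1) ^ 2 * hr
lemma SM_posdef (q r : ℝ) (hq : 0 < q) (hr : r ^ 2 = q) (m : ℕ) :
    (Matrix.of fun i j : Fin (m + 1) => sR q r (i : ℕ) (j : ℕ)).PosDef := by
  rw [posDef_iff_dotProduct_mulVec]
  constructor
  · ext i j
    simp only [conjTranspose_apply, Matrix.of_apply, star_trivial, sR]
    split_ifs <;> first | ring1 | (exfalso; omega)
  · intro x hx
    set X : ℕ → ℝ := fun k => if h : k < m + 1 then x ⟨k, h⟩ else 0 with hXdef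
    have hX : ∀ i : Fin (m + 1), x i = X (i : ℕ) := by
      intro i
      simp [hXdef, i.isLt]
      intro h; have := i.isLt; omega
    have key : dotProduct (star x)
        ((Matrix.of fun i j : Fin (m + 1) => sR q r (i : ℕ) (j : ℕ)) *ᵥ x)
        = ∑ i ∈ Finset.range (m + 1), ∑ j ∈ Finset.range (m + 1), X i * sR q r i j * X j := by
      rw [← Fin.sum_univ_eq_sum_range
        (fun k => ∑ j ∈ Finset.range (m + 1), X k * sR q r k j * X j)]
      simp only [star_trivial, dotProduct, Matrix.mulVec, Matrix.of_apply, Finset.mul_sum]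
      refine Finset.sum_congr rfl fun i _ => ?_
      rw [← Fin.sum_univ_eq_sum_range (fun k => X (i : ℕ) * sR q r (i : ℕ) k * X k)]
      refine Finset.sum_congr rfl fun j _ => ?_
      rw [← hX i, ← hX j]
      ring
    rw [key, lemA, Nat.add_sub_cancel, lemB q r hr]
    have hE : 0 ≤ ∑ k ∈ Finset.range m, (X k - r * X (k + 1)) ^ 2 + q * X 0 ^ 2 + X m ^ 2 := by
      positivity
    rcases hE.lt_or_eq with h | h
    · exact h
    · exfalso
      have hs0 : 0 ≤ ∑ k ∈ Finset.range m, (X k - r * X (k + 1)) ^ 2 :=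
        Finset.sum_nonneg fun k _ => sq_nonneg _
      have h0 : q * X 0 ^ 2 = 0 ∧ X m ^ 2 = 0 ∧
          ∑ k ∈ Finset.range m, (X k - r * X (k + 1)) ^ 2 = 0 := by
        refine ⟨?_, ?_, ?_⟩ <;> nlinarith [sq_nonneg (X 0), sq_nonneg (X m)]
      have hXm : X m = 0 := by
        have := h0.2.1
        nlinarith
      have hstep : ∀ k < m, X k = r * X (k + 1) := by
        intro k hk
        have := (Finset.sum_eq_zero_iff_of_nonneg fun k _ => sq_nonneg
          (X k - r * X (k + 1))).mp h0.2.2 k (Finset.mem_range.2 hk)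
        have h2 : X k - r * X (k + 1) = 0 := by
          nlinarith
        linarith
      have hall : ∀ j : ℕ, X (m - j) = 0 := by
        intro j
        induction j with
        | zero => simpa using hXm
        | succ j ih =>
            rcases le_or_gt m j with hj | hj
            · have e : m - (j + 1) = m - j := by omega
              rw [e]; exact ih
            · have hk : m - (j + 1) < m := by omega
              have e : (m - (j + 1)) + 1 = m - j := by omega
              rw [hstep _ hk, e, ih, mul_zero]
      apply hx
      funext i
      have : X (i : ℕ) = 0 := by
        have e : (i : ℕ) = m - (m - (i : ℕ)) := by omega
        rw [e]; exact hall _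
      rw [hX i, this, Pi.zero_apply]
lemma posdef_submatrix {n ι : Type*} [Fintype n] [Fintype ι]
    {M : Matrix n n ℝ} (hM : M.PosDef) (f : ι → n) (hf : Function.Injective f) :
    (M.submatrix f f).PosDef := by
  rw [posDef_iff_dotProduct_mulVec]
  refine ⟨hM.1.submatrix f, fun x hx => ?_⟩
  classical
  set y : n → ℝ := fun j => ∑ i : ι, if f i = j then x i else 0 with hy
  have hyf : ∀ i, y (f i) = x i := by
    intro i
    simp only [hy]
    rw [Finset.sum_eq_single i]
    · simp
    · intro b _ hb
      rw [if_neg (fun hc => hb (hf hc))]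
    · intro h; exact absurd (Finset.mem_univ i) h
  have hy0 : y ≠ 0 := by
    intro h0
    apply hx
    funext i
    rw [← hyf i, h0, Pi.zero_apply, Pi.zero_apply]
  have hdot : ∀ v : n → ℝ, dotProduct y v = ∑ i : ι, x i * v (f i) := by
    intro v
    simp only [dotProduct, hy, Finset.sum_mul, ite_mul, zero_mul]
    rw [Finset.sum_comm]
    simp [Finset.sum_ite_eq]
  have hmv : ∀ i : ι, (M *ᵥ y) (f i) = ∑ i' : ι, M (f i) (f i') * x i' := by
    intro i
    simp only [Matrix.mulVec, dotProduct, hy, Finset.mul_sum, mul_ite, mul_zero]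
    rw [Finset.sum_comm]
    simp [Finset.sum_ite_eq]
  have hquad : dotProduct (star x) (M.submatrix f f *ᵥ x)
      = dotProduct (star y) (M *ᵥ y) := by
    simp only [star_trivial]
    rw [hdot (M *ᵥ y)]
    simp_rw [hmv]
    simp [dotProduct, Matrix.mulVec, Matrix.submatrix_apply]
  rw [hquad]
  exact (posDef_iff_dotProduct_mulVec.mp hM).2 hy0

theorem Aq_M_matrix (n : ℕ) (q : ℚ) (hn : 1 ≤ n) (hq : 0 < q) :
    (∀ i j : Fin n, i ≠ j → Aq n q i j ≤ 0) ∧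
    (∀ J : Finset (Fin n), J.Nonempty →
      0 < ((Aq n q).submatrix (fun a : J => (a : Fin n)) (fun a : J => (a : Fin n))).det) := by
  constructor
  · intro i j hij
    unfold Aq
    split_ifs with h1 h2 h3
    · exact absurd (Fin.ext h1) hij
    · linarith
    · linarith
    · exact le_refl 0
  · intro J _
    obtain ⟨m, rfl⟩ : ∃ m, n = m + 1 := ⟨n - 1, by omega⟩
    set f : ↥J → Fin (m + 1) := fun a => (a : Fin (m + 1)) with hfdef
    have hf : Function.Injective f := Subtype.val_injective
    set qR : ℝ := (q : ℝ) with hqR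
    have hqR0 : 0 < qR := by rw [hqR]; exact_mod_cast hq
    set r : ℝ := Real.sqrt qR with hrdef
    have hr0 : 0 < r := Real.sqrt_pos.2 hqR0
    have hr2 : r ^ 2 = qR := Real.sq_sqrt hqR0.le
    set S : Matrix (Fin (m + 1)) (Fin (m + 1)) ℝ :=
      Matrix.of fun i j : Fin (m + 1) => sR qR r (i : ℕ) (j : ℕ) with hS
    have hSpd : S.PosDef := SM_posdef qR r hqR0 hr2 m
    have hsubpd : (S.submatrix f f).PosDef := posdef_submatrix hSpd f hf
    have hdetS : 0 < (S.submatrix f f).det := hsubpd.det_pos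
    -- conjugation identity
    set B : Matrix (Fin (m + 1)) (Fin (m + 1)) ℝ := (Aq (m + 1) q).map (Rat.cast) with hB
    set d : ↥J → ℝ := fun a => (r ^ ((f a : Fin (m + 1)) : ℕ))⁻¹ with hd
    set d' : ↥J → ℝ := fun a => r ^ ((f a : Fin (m + 1)) : ℕ) with hd'
    have hconj : S.submatrix f f
        = Matrix.diagonal d * (B.submatrix f f) * Matrix.diagonal d' := by
      ext a b
      rw [Matrix.mul_diagonal, Matrix.diagonal_mul]
      simp only [hS, hB, hd, hd', Matrix.submatrix_apply, Matrix.of_apply, Matrix.map_apply]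
      unfold Aq sR
      have hrne : r ≠ 0 := hr0.ne'
      split_ifs with h1 h2 h3
      · rw [h1]
        push_cast
        field_simp
        rw [hqR]
      · rw [← h2, pow_succ]
        push_cast
        field_simp
        try ring
      · rw [← h3, pow_succ]
        push_cast
        rw [← hqR, ← hr2]
        field_simp
        try ring
      · push_cast
        simp
    have hdetB : (B.submatrix f f).det
        = ((((Aq (m + 1) q).submatrix f f).det : ℚ) : ℝ) := by
      rw [hB, Matrix.submatrix_map]
      exact ((Rat.castHom ℝ).map_det ((Aq (m + 1) q).submatrix f f)).symm
    have hprod : (∏ a, d a) * ∏ a, d' a = 1 := by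
      rw [← Finset.prod_mul_distrib]
      refine Finset.prod_eq_one fun a _ => ?_
      exact inv_mul_cancel₀ (pow_ne_zero _ hr0.ne')
    rw [hconj, Matrix.det_mul, Matrix.det_mul, Matrix.det_diagonal, Matrix.det_diagonal,
      hdetB] at hdetS
    have e : (∏ a, d a) * ((((Aq (m + 1) q).submatrix f f).det : ℚ) : ℝ) * ∏ a, d' a
        = ((((Aq (m + 1) q).submatrix f f).det : ℚ) : ℝ) * ((∏ a, d a) * ∏ a, d' a) := by
      ring
    rw [e, hprod, mul_one] at hdetS
    exact_mod_cast hdetS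
end

section
/- The vectors e_i (standard basis vectors of R^n, i ∈ J) together with -α_k (negatives of the columns of A(n,q), k ∈ K), for disjoint subsets J, K ⊆ {1,...,n}, are linearly independent; hence the cone σ_{J,K} = cone{e_i : i ∈ J} + cone{-α_k : k ∈ K} is a simplicial cone of dimension |J| + |K|. -/
lemma sq_identity (e : ℕ → ℚ) (n : ℕ) :
    ∑ i ∈ Finset.range n, (e i - e (i+1))^2
      = 2 * ∑ i ∈ Finset.range n, (e i)^2 - (e 0)^2 + (e n)^2
        - 2 * ∑ i ∈ Finset.range n, e i * e (i+1) := by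
  induction n with
  | zero => simp
  | succ m ih =>
    rw [Finset.sum_range_succ, Finset.sum_range_succ (f := fun i => (e i)^2),
      Finset.sum_range_succ (f := fun i => e i * e (i+1))]
    linear_combination ih

lemma quad_zero (n : ℕ) (e : ℕ → ℚ)
    (hen : e n = 0)
    (h : ∑ i ∈ Finset.range n, (e i)^2 = ∑ i ∈ Finset.range n, e i * e (i+1)) :
    ∀ i, i ≤ n → e i = 0 := by
  have hid := sq_identity e n
  rw [hen, ← h] at hid
  have hsum : ∑ i ∈ Finset.range n, (e i - e (i+1))^2 + (e 0)^2 = 0 := by linarith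
  have hnn : (0:ℚ) ≤ ∑ i ∈ Finset.range n, (e i - e (i+1))^2 :=
    Finset.sum_nonneg fun i _ => sq_nonneg _
  have he0 : e 0 = 0 := by nlinarith [sq_nonneg (e 0)]
  have hS : ∑ i ∈ Finset.range n, (e i - e (i+1))^2 = 0 := by nlinarith [sq_nonneg (e 0)]
  have hdiff : ∀ i < n, e (i+1) = e i := by
    intro i hi
    have := (Finset.sum_eq_zero_iff_of_nonneg (fun i _ => sq_nonneg (e i - e (i+1)))).1 hS i
      (Finset.mem_range.2 hi)
    have : e i - e (i+1) = 0 := by nlinarith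
    linarith
  intro i
  induction i with
  | zero => intro _; exact he0
  | succ j ih =>
    intro hj
    rw [hdiff j (by omega), ih (by omega)]


lemma Aq_quad_zero (n : ℕ) (q : ℚ) (hq : 0 < q) (d : Fin n → ℚ)
    (hQ : ∑ j : Fin n, d j * ∑ k : Fin n, Aq n q j k * d k = 0) :
    ∀ j : Fin n, d j = 0 := by
  set E : ℕ → ℚ := fun i => if h : i < n then d ⟨i, h⟩ else 0 with hE
  have hdE : ∀ j : Fin n, d j = E (j : ℕ) := by
    intro j; simp [hE, j.isLt]
  set AE : ℕ → ℕ → ℚ := fun j k =>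
    if j = k then q + 1 else if j + 1 = k then -1 else if k + 1 = j then -q else 0 with hAE
  have hAqAE : ∀ j k : Fin n, Aq n q j k = AE (j : ℕ) (k : ℕ) := fun j k => rfl
  have hQ2 : ∑ j ∈ Finset.range n, E j * ∑ k ∈ Finset.range n, AE j k * E k = 0 := by
    rw [← hQ]
    rw [← Fin.sum_univ_eq_sum_range (fun j => E j * ∑ k ∈ Finset.range n, AE j k * E k) n]
    refine Finset.sum_congr rfl fun j _ => ?_
    rw [← hdE j, ← Fin.sum_univ_eq_sum_range (fun k => AE (j:ℕ) k * E k) n]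
    congr 1
    refine Finset.sum_congr rfl fun k _ => ?_
    rw [← hdE k, hAqAE]
  have hEtop : ∀ i, n ≤ i → E i = 0 := by
    intro i hi; simp [hE, Nat.not_lt.2 hi]
  have hsplit : ∀ j k : ℕ, E j * (AE j k * E k)
      = (if j = k then (q+1)*(E j * E k) else 0)
        + (if j + 1 = k then -(E j * E k) else 0)
        + (if k + 1 = j then -(q * (E j * E k)) else 0) := by
    intro j k
    simp only [hAE]
    split_ifs <;> first | ring1 | (exfalso; omega)
  have hQ3 : (q+1) * (∑ i ∈ Finset.range n, (E i)^2)
      - (1+q) * (∑ i ∈ Finset.range n, E i * E (i+1)) = 0 := by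
    rw [← hQ2]
    have expand : ∑ j ∈ Finset.range n, E j * ∑ k ∈ Finset.range n, AE j k * E k
        = ∑ j ∈ Finset.range n, ∑ k ∈ Finset.range n, E j * (AE j k * E k) := by
      refine Finset.sum_congr rfl fun j _ => ?_
      rw [Finset.mul_sum]
    rw [expand]
    have step : ∀ j ∈ Finset.range n, ∑ k ∈ Finset.range n, E j * (AE j k * E k)
        = ((q+1) * (E j * E j) + -(E j * E (j+1)))
          + ∑ k ∈ Finset.range n, (if k + 1 = j then -(q * (E j * E k)) else 0) := by
      intro j hj
      have : ∑ k ∈ Finset.range n, E j * (AE j k * E k)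
          = ∑ k ∈ Finset.range n, ((if j = k then (q+1)*(E j * E k) else 0)
            + (if j + 1 = k then -(E j * E k) else 0)
            + (if k + 1 = j then -(q * (E j * E k)) else 0)) :=
        Finset.sum_congr rfl fun k _ => hsplit j k
      rw [this]
      rw [Finset.sum_add_distrib, Finset.sum_add_distrib]
      congr 1
      congr 1
      · rw [Finset.sum_ite_eq, if_pos hj]
      · rw [Finset.sum_ite_eq, ]
        split_ifs with h
        · rfl
        · rw [hEtop (j+1) (by simpa using h), mul_zero, neg_zero]
    rw [Finset.sum_congr rfl step, Finset.sum_add_distrib]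
    have last : ∑ j ∈ Finset.range n, ∑ k ∈ Finset.range n,
        (if k + 1 = j then -(q * (E j * E k)) else 0)
        = ∑ k ∈ Finset.range n, -(q * (E k * E (k+1))) := by
      rw [Finset.sum_comm]
      refine Finset.sum_congr rfl fun k _ => ?_
      rw [Finset.sum_ite_eq]
      split_ifs with h
      · ring
      · rw [hEtop (k+1) (by simpa using h), mul_zero, mul_zero, neg_zero]
    rw [last]
    simp only [Finset.mul_sum, ← Finset.sum_add_distrib, ← Finset.sum_sub_distrib]
    exact Finset.sum_congr rfl fun i _ => by ring
  have h4 : (q+1) * ((∑ i ∈ Finset.range n, (E i)^2)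
      - (∑ i ∈ Finset.range n, E i * E (i+1))) = 0 := by linear_combination hQ3
  have h5 : (∑ i ∈ Finset.range n, (E i)^2) = ∑ i ∈ Finset.range n, E i * E (i+1) := by
    rcases mul_eq_zero.1 h4 with h | h
    · linarith
    · linarith
  have hz := quad_zero n E (hEtop n le_rfl) h5
  intro j
  rw [hdE j]
  exact hz _ (le_of_lt j.isLt)

theorem Aq_cone_generators_linearIndependent (n : ℕ) (q : ℚ) (hn : 1 ≤ n) (hq : 0 < q)
    (J K : Finset (Fin n)) (hJK : Disjoint J K) :
    LinearIndependent ℚ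
      (Sum.elim (fun i : J => Pi.single (i : Fin n) (1 : ℚ))
        (fun k : K => -(fun i : Fin n => Aq n q i k))) := by
  rw [Fintype.linearIndependent_iff]
  intro g hg
  set c : Fin n → ℚ := fun j => if h : j ∈ J then g (Sum.inl ⟨j, h⟩) else 0 with hc
  set d : Fin n → ℚ := fun j => if h : j ∈ K then g (Sum.inr ⟨j, h⟩) else 0 with hd
  -- coordinate equations: c j = ∑ k, Aq n q j k * d k
  have hcoord : ∀ j : Fin n, c j = ∑ k : Fin n, Aq n q j k * d k := by
    intro j
    have h1 := congrFun hg j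
    rw [Fintype.sum_sum_type] at h1
    simp only [Sum.elim_inl, Sum.elim_inr, Pi.add_apply, Finset.sum_apply, Pi.smul_apply,
      Pi.neg_apply, smul_eq_mul, Pi.zero_apply, Pi.single_apply] at h1
    have e1 : ∑ i : J, g (Sum.inl i) * (if j = (i : Fin n) then (1:ℚ) else 0) = c j := by
      rw [show (∑ i : J, g (Sum.inl i) * (if j = (i : Fin n) then (1:ℚ) else 0))
          = ∑ i : J, (fun x : Fin n => c x * (if j = x then (1:ℚ) else 0)) (i : Fin n) from
        Finset.sum_congr rfl (by
          intro i _
          simp only [hc]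
          rw [dif_pos i.2])]
      rw [Finset.sum_coe_sort J (fun x : Fin n => c x * (if j = x then (1:ℚ) else 0))]
      rw [Finset.sum_subset (Finset.subset_univ J) (by
        intro x _ hx
        simp only [hc]
        rw [dif_neg hx, zero_mul])]
      simp [Finset.sum_ite_eq]
    have e2 : ∑ k : K, g (Sum.inr k) * (-Aq n q j (k : Fin n))
        = -∑ k : Fin n, Aq n q j k * d k := by
      rw [show (∑ k : K, g (Sum.inr k) * (-Aq n q j (k : Fin n)))
          = ∑ k : K, (fun x : Fin n => -(Aq n q j x * d x)) (k : Fin n) from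
        Finset.sum_congr rfl (by
          intro k _
          simp only [hd]
          rw [dif_pos k.2]
          ring)]
      rw [Finset.sum_coe_sort K (fun x : Fin n => -(Aq n q j x * d x))]
      rw [Finset.sum_subset (Finset.subset_univ K) (by
        intro x _ hx
        simp only [hd]
        rw [dif_neg hx, mul_zero, neg_zero])]
      rw [← Finset.sum_neg_distrib]
    rw [e1, e2] at h1
    linarith
  have hdc : ∀ j : Fin n, d j * c j = 0 := by
    intro j
    by_cases hjK : j ∈ K
    · have hjJ : j ∉ J := Finset.disjoint_right.mp hJK hjK
      simp [hc, dif_neg hjJ]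
    · simp [hd, dif_neg hjK]
  have hQ : ∑ j : Fin n, d j * ∑ k : Fin n, Aq n q j k * d k = 0 := by
    calc ∑ j : Fin n, d j * ∑ k : Fin n, Aq n q j k * d k
        = ∑ j : Fin n, d j * c j :=
          Finset.sum_congr rfl fun j _ => by rw [← hcoord j]
      _ = 0 := Finset.sum_eq_zero fun j _ => hdc j
  have hd0 : ∀ j : Fin n, d j = 0 := Aq_quad_zero n q hq d hQ
  have hc0 : ∀ j : Fin n, c j = 0 := by
    intro j
    rw [hcoord j]
    exact Finset.sum_eq_zero fun k _ => by rw [hd0 k, mul_zero]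
  intro x
  cases x with
  | inl i =>
    have h := hc0 (i : Fin n)
    simp only [hc, dif_pos i.2] at h
    simpa using h
  | inr k =>
    have h := hd0 (k : Fin n)
    simp only [hd, dif_pos k.2] at h
    simpa using h
end

section
/- For disjoint subsets J, K ⊆ {1,...,n} (not both equal to ∅ trivially), the cone σ_{J,K} = cone{e_i : i ∈ J} + cone{-α_k : k ∈ K} in R^n is strongly convex, i.e., contains no nonzero linear subspace (equivalently σ_{J,K} ∩ (-σ_{J,K}) = {0}). -/
/-- The cone `σ_{J,K} = cone{e_i : i ∈ J} + cone{-α_k : k ∈ K} ⊆ ℝⁿ`,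
where `α_k` is the `k`-th column of `A(n,q)`. -/
def sigmaCone (n : ℕ) (q : ℚ) (J K : Finset (Fin n)) : Set (Fin n → ℝ) :=
  {v | ∃ c d : Fin n → ℝ, (∀ i, 0 ≤ c i) ∧ (∀ i, 0 ≤ d i) ∧
    v = (∑ i ∈ J, c i • (Pi.single i (1 : ℝ) : Fin n → ℝ)) +
        ∑ k ∈ K, d k • (-(fun i : Fin n => (Aq n q i k : ℝ)) : Fin n → ℝ)}

lemma maxPrinciple (n : ℕ) (q : ℝ) (hq : 0 < q) (x : ℤ → ℝ)
    (hx0 : ∀ m, 0 ≤ x m) (hsupp : ∀ m, x m ≠ 0 → 0 ≤ m ∧ m < n)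
    (heq : ∀ m, x m ≠ 0 → (q + 1) * x m = x (m + 1) + q * x (m - 1)) :
    ∀ m, x m = 0 := by
  by_contra h
  push_neg at h
  obtain ⟨m0, hm0⟩ := h
  have hm0pos : 0 < x m0 := lt_of_le_of_ne (hx0 m0) (Ne.symm hm0)
  set G : Finset ℤ := Finset.Icc 0 (n : ℤ) with hG
  have hm0G : m0 ∈ G := by
    obtain ⟨h1, h2⟩ := hsupp m0 hm0
    simp only [hG, Finset.mem_Icc]; omega
  obtain ⟨k0, hk0G, hk0max⟩ := G.exists_max_image x ⟨m0, hm0G⟩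
  set M := x k0 with hM
  have hMpos : 0 < M := lt_of_lt_of_le hm0pos (hk0max m0 hm0G)
  have hMub : ∀ m, x m ≤ M := by
    intro m
    by_cases hxm : x m = 0
    · rw [hxm]; exact le_of_lt hMpos
    · obtain ⟨h1, h2⟩ := hsupp m hxm
      exact hk0max m (by simp only [hG, Finset.mem_Icc]; omega)
  set F : Finset ℤ := G.filter (fun m => x m = M) with hF
  have hFne : F.Nonempty := ⟨k0, by simp [hF, hk0G, hM]⟩
  set k := F.max' hFne with hk
  have hkF : k ∈ F := F.max'_mem hFne
  have hxk : x k = M := (Finset.mem_filter.mp hkF).2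
  have hxkne : x k ≠ 0 := by rw [hxk]; exact ne_of_gt hMpos
  have he := heq k hxkne
  rw [hxk] at he
  have h1 : M ≤ x (k + 1) := by nlinarith [hMub (k - 1)]
  have h2 : x (k + 1) = M := le_antisymm (hMub _) h1
  have hne : x (k + 1) ≠ 0 := by rw [h2]; exact ne_of_gt hMpos
  obtain ⟨hb1, hb2⟩ := hsupp _ hne
  have hmem : k + 1 ∈ F := by
    simp only [hF, Finset.mem_filter, hG, Finset.mem_Icc]
    exact ⟨⟨by omega, by omega⟩, h2⟩
  have := F.le_max' _ hmem
  omega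

theorem sigmaCone_strongly_convex (n : ℕ) (q : ℚ) (hn : 1 ≤ n) (hq : 0 < q)
    (J K : Finset (Fin n)) (hJK : Disjoint J K) (v : Fin n → ℝ)
    (hv : v ∈ sigmaCone n q J K) (hv' : -v ∈ sigmaCone n q J K) : v = 0 := by
  classical
  obtain ⟨c, d, hc, hd, hveq⟩ := hv
  obtain ⟨c', d', hc', hd', hveq'⟩ := hv'
  have hqr : (0 : ℝ) < (q : ℝ) := by exact_mod_cast hq
  set w : Fin n → ℝ := fun k => d k + d' k with hw
  have hw0 : ∀ k, 0 ≤ w k := fun k => add_nonneg (hd k) (hd' k)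
  -- coordinate equations
  have hco : ∀ j : Fin n, (if j ∈ J then c j + c' j else 0) =
      ∑ k ∈ K, w k * (Aq n q j k : ℝ) := by
    intro j
    have h0 : (0 : Fin n → ℝ) =
        ((∑ i ∈ J, c i • (Pi.single i (1 : ℝ) : Fin n → ℝ)) +
          ∑ k ∈ K, d k • (-(fun i : Fin n => (Aq n q i k : ℝ)) : Fin n → ℝ)) +
        ((∑ i ∈ J, c' i • (Pi.single i (1 : ℝ) : Fin n → ℝ)) +
          ∑ k ∈ K, d' k • (-(fun i : Fin n => (Aq n q i k : ℝ)) : Fin n → ℝ)) := by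
      rw [← hveq, ← hveq']; simp
    have h0j := congrFun h0 j
    simp only [Pi.add_apply, Pi.zero_apply, Finset.sum_apply, Pi.smul_apply,
      Pi.neg_apply, Pi.single_apply, smul_eq_mul, mul_neg,
      Finset.sum_neg_distrib] at h0j
    have hs1 : ∀ (f : Fin n → ℝ), ∑ i ∈ J, f i * (if j = i then (1:ℝ) else 0)
        = if j ∈ J then f j else 0 := by
      intro f
      rw [Finset.sum_congr rfl (fun i _ => by rw [mul_ite, mul_one, mul_zero]),
        Finset.sum_ite_eq J j f]
    rw [hs1 c, hs1 c'] at h0j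
    have key : (if j ∈ J then c j else 0) + (if j ∈ J then c' j else 0)
        = ∑ k ∈ K, d k * (Aq n q j k : ℝ) + ∑ k ∈ K, d' k * (Aq n q j k : ℝ) := by
      linarith [h0j]
    rw [← Finset.sum_add_distrib] at key
    have : (if j ∈ J then c j + c' j else 0) =
        (if j ∈ J then c j else 0) + (if j ∈ J then c' j else 0) := by
      by_cases hJ : j ∈ J <;> simp [hJ]
    rw [this, key]
    exact Finset.sum_congr rfl (fun k _ => by ring)
  set x : ℤ → ℝ := fun m => ∑ k ∈ K, (if ((k : ℕ) : ℤ) = m then w k else 0) with hx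
  have hxval : ∀ k : Fin n, x ((k : ℕ) : ℤ) = if k ∈ K then w k else 0 := by
    intro k
    simp only [hx, Nat.cast_inj, Fin.val_inj, Finset.sum_ite_eq']
  have hx0 : ∀ m, 0 ≤ x m := by
    intro m
    apply Finset.sum_nonneg
    intro k _
    by_cases h : ((k : ℕ) : ℤ) = m <;> simp [h, hw0 k]
  have hsupp : ∀ m, x m ≠ 0 → 0 ≤ m ∧ m < n := by
    intro m hm
    by_contra hcon
    apply hm
    apply Finset.sum_eq_zero
    intro k _
    rw [if_neg]
    have := k.isLt
    omega
  have heqn : ∀ m, x m ≠ 0 → ((q : ℝ) + 1) * x m = x (m + 1) + (q : ℝ) * x (m - 1) := by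
    intro m hm
    -- m = some k ∈ K
    have : ∃ k : Fin n, k ∈ K ∧ ((k : ℕ) : ℤ) = m := by
      by_contra hcon
      push_neg at hcon
      apply hm
      apply Finset.sum_eq_zero
      intro k hk
      rw [if_neg (hcon k hk)]
    obtain ⟨k, hkK, hkm⟩ := this
    have hkJ : k ∉ J := fun hkJ => (Finset.disjoint_left.mp hJK hkJ) hkK
    have hck := hco k
    rw [if_neg hkJ] at hck
    have hexp : ∑ k' ∈ K, w k' * (Aq n q k k' : ℝ) =
        ((q : ℝ) + 1) * x m - x (m + 1) - (q : ℝ) * x (m - 1) := by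
      subst hkm
      simp only [hx, Finset.mul_sum, ← Finset.sum_sub_distrib]
      apply Finset.sum_congr rfl
      intro k' _
      have hk'lt := k'.isLt
      have hklt := k.isLt
      by_cases h1 : (k : ℕ) = (k' : ℕ)
      · rw [if_pos (by omega), if_neg (by omega), if_neg (by omega)]
        simp only [Aq, if_pos h1]
        push_cast
        ring
      · by_cases h2 : (k : ℕ) + 1 = (k' : ℕ)
        · rw [if_neg (by omega), if_pos (by omega), if_neg (by omega)]
          simp only [Aq, if_neg h1, if_pos h2]
          push_cast
          ring
        · by_cases h3 : (k' : ℕ) + 1 = (k : ℕ)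
          · rw [if_neg (by omega), if_neg (by omega), if_pos (by omega)]
            simp only [Aq, if_neg h1, if_neg h2, if_pos h3]
            push_cast
            ring
          · rw [if_neg (by omega), if_neg (by omega), if_neg (by omega)]
            simp only [Aq, if_neg h1, if_neg h2, if_neg h3]
            push_cast
            ring
    rw [hexp] at hck
    linarith
  have hxzero := maxPrinciple n (q : ℝ) hqr x hx0 hsupp heqn
  -- w vanishes on K
  have hwK : ∀ k ∈ K, w k = 0 := by
    intro k hk
    have := hxval k
    rw [hxzero _, if_pos hk] at this
    exact this.symm
  have hdK : ∀ k ∈ K, d k = 0 := by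
    intro k hk
    have h := hwK k hk
    have := hd k
    have := hd' k
    simp only [hw] at h
    linarith
  have hcJ : ∀ j ∈ J, c j = 0 := by
    intro j hj
    have h := hco j
    rw [if_pos hj, Finset.sum_eq_zero (fun k hk => by rw [hwK k hk, zero_mul])] at h
    have := hc j
    have := hc' j
    linarith
  rw [hveq]
  rw [Finset.sum_eq_zero (fun i hi => by rw [hcJ i hi, zero_smul]),
    Finset.sum_eq_zero (fun k hk => by rw [hdK k hk, zero_smul])]
  simp
end

section
/- For pairs of disjoint subsets (J,K) and (P,Q) of {1,...,n}, the intersection of the cones σ_{J,K} and σ_{P,Q} equals σ_{J∩P, K∩Q}, where σ_{J,K} = cone{e_i : i ∈ J} + cone{-α_k : k ∈ K}. -/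
open Finset

noncomputable def yext (n : ℕ) (x : Fin n → ℝ) : ℕ → ℝ := fun j =>
  if h : 0 < j ∧ j ≤ n then x ⟨j-1, by omega⟩ else 0

lemma yext_succ (n : ℕ) (x : Fin n → ℝ) (k : Fin n) : yext n x (k.1+1) = x k := by
  have h : 0 < k.1+1 ∧ k.1+1 ≤ n := ⟨Nat.succ_pos _, k.2⟩
  simp only [yext, dif_pos h]
  congr

lemma yext_zero (n : ℕ) (x : Fin n → ℝ) : yext n x 0 = 0 := by simp [yext]

lemma yext_big (n : ℕ) (x : Fin n → ℝ) (j : ℕ) (h : n < j) : yext n x j = 0 := by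
  simp only [yext]; rw [dif_neg]; omega

lemma aq_identity (Q r : ℝ) (hQr : r * Q = 1) (y : ℕ → ℝ) (m : ℕ) :
    ∑ i ∈ Finset.range (m+1), r^i * (y (i+1) * ((Q+1) * y (i+1) - Q * y i - y (i+2)))
      = Q * (y 1 * (y 1 - y 0))
        + (∑ i ∈ Finset.range m, r^i * (y (i+1) - y (i+2))^2)
        + r^m * (y (m+1) * (y (m+1) - y (m+2))) := by
  induction m with
  | zero => simp; ring
  | succ m ih =>
    rw [Finset.sum_range_succ, ih, Finset.sum_range_succ, pow_succ]
    linear_combination (r^m * (y (m+2)^2 - y (m+1) * y (m+2))) * hQr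

lemma rowsum (n : ℕ) (q : ℚ) (x : Fin n → ℝ) (i : Fin n) :
    ∑ k, (Aq n q i k : ℝ) * x k
      = ((q:ℝ)+1) * yext n x (i.1+1) - (q:ℝ) * yext n x i.1 - yext n x (i.1+2) := by
  have hsum : ∑ k, (Aq n q i k : ℝ) * x k
      = ∑ j ∈ Finset.range n,
          ((if j = i.1 then ((q:ℝ)+1) * yext n x (j+1) else 0)
            + (if j = i.1+1 then -(yext n x (j+1)) else 0)
            + (if j + 1 = i.1 then -(q:ℝ) * yext n x (j+1) else 0)) := by
    rw [← Fin.sum_univ_eq_sum_range]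
    refine Finset.sum_congr rfl (fun k _ => ?_)
    rw [← yext_succ n x k]
    simp only [Aq]
    split_ifs <;> push_cast <;> first | ring1 | (exfalso; omega)
  rw [hsum, Finset.sum_add_distrib, Finset.sum_add_distrib]
  have S1 : ∑ j ∈ Finset.range n, (if j = i.1 then ((q:ℝ)+1) * yext n x (j+1) else 0)
      = ((q:ℝ)+1) * yext n x (i.1+1) := by
    rw [Finset.sum_ite_eq' (Finset.range n) i.1 (fun j => ((q:ℝ)+1) * yext n x (j+1))]
    simp [i.2]
  have S2 : ∑ j ∈ Finset.range n, (if j = i.1+1 then -(yext n x (j+1)) else 0)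
      = -(yext n x (i.1+2)) := by
    rw [Finset.sum_ite_eq' (Finset.range n) (i.1+1) (fun j => -(yext n x (j+1)))]
    by_cases h : i.1+1 < n
    · simp [h]
    · rw [if_neg (by simpa using h), yext_big n x _ (by omega)]
      simp
  have S3 : ∑ j ∈ Finset.range n, (if j + 1 = i.1 then -(q:ℝ) * yext n x (j+1) else 0)
      = -(q:ℝ) * yext n x i.1 := by
    rcases Nat.eq_zero_or_pos i.1 with h0 | h0
    · rw [Finset.sum_eq_zero (fun j _ => by rw [if_neg (by omega)])]
      rw [h0, yext_zero]; ring
    · obtain ⟨t, ht⟩ : ∃ t, i.1 = t + 1 := ⟨i.1 - 1, by omega⟩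
      have he : ∀ j : ℕ, (j + 1 = i.1) = (j = t) := fun j => by
        rw [ht]; simp [Nat.succ_inj]
      simp only [he]
      rw [Finset.sum_ite_eq' (Finset.range n) t (fun j => -(q:ℝ) * yext n x (j+1))]
      rw [if_pos (Finset.mem_range.2 (by omega)), ← ht]
  rw [S1, S2, S3]; ring

/-- Uniqueness of complementary representations. -/
lemma uniq (n : ℕ) (hn : 1 ≤ n) (q : ℚ) (hq : 0 < q)
    (C D C' D' : Fin n → ℝ)
    (hC : ∀ i, 0 ≤ C i) (hD : ∀ i, 0 ≤ D i) (hC' : ∀ i, 0 ≤ C' i) (hD' : ∀ i, 0 ≤ D' i)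
    (hcomp : ∀ i, C i * D i = 0) (hcomp' : ∀ i, C' i * D' i = 0)
    (heq : ∀ j, C j - ∑ k, (Aq n q j k : ℝ) * D k
              = C' j - ∑ k, (Aq n q j k : ℝ) * D' k) :
    C = C' ∧ D = D' := by
  set Q : ℝ := (q:ℝ) with hQdef
  have hQ : 0 < Q := by rw [hQdef]; exact_mod_cast hq
  set r : ℝ := Q⁻¹ with hrdef
  have hr : 0 < r := inv_pos.2 hQ
  have hQr : r * Q = 1 := inv_mul_cancel₀ hQ.ne'
  set x : Fin n → ℝ := fun k => D k - D' k with hxdef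
  have hAx : ∀ i, ∑ k, (Aq n q i k : ℝ) * x k = C i - C' i := by
    intro i
    have h := heq i
    simp only [hxdef, mul_sub, Finset.sum_sub_distrib]
    linarith
  have hsign : ∀ i : Fin n, x i * (C i - C' i) ≤ 0 := by
    intro i
    have h1 := hcomp i
    have h2 := hcomp' i
    have h3 := mul_nonneg (hD i) (hC' i)
    have h4 := mul_nonneg (hD' i) (hC i)
    simp only [hxdef]
    nlinarith
  set y : ℕ → ℝ := yext n x with hydef
  obtain ⟨m, rfl⟩ : ∃ m, n = m + 1 := ⟨n - 1, by omega⟩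
  have termsign : ∀ i ∈ Finset.range (m+1),
      r^i * (y (i+1) * ((Q+1) * y (i+1) - Q * y i - y (i+2))) ≤ 0 := by
    intro i hi
    have hin : i < m + 1 := Finset.mem_range.1 hi
    set k : Fin (m+1) := ⟨i, hin⟩ with hkdef
    have h1 : y (i+1) = x k := yext_succ _ x k
    have h2 : (Q+1) * y (i+1) - Q * y i - y (i+2) = C k - C' k := by
      rw [← hAx k, rowsum]
    rw [h2, h1]
    exact mul_nonpos_of_nonneg_of_nonpos (pow_nonneg hr.le i) (hsign k)
  have total : ∑ i ∈ Finset.range (m+1),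
      r^i * (y (i+1) * ((Q+1) * y (i+1) - Q * y i - y (i+2))) ≤ 0 :=
    Finset.sum_nonpos termsign
  rw [aq_identity Q r hQr y m] at total
  have h0 : y 0 = 0 := yext_zero _ x
  have hm2 : y (m+2) = 0 := yext_big _ x _ (by omega)
  rw [h0, hm2, sub_zero, sub_zero] at total
  have partA : 0 ≤ Q * (y 1 * y 1) := mul_nonneg hQ.le (mul_self_nonneg _)
  have partB : 0 ≤ ∑ i ∈ Finset.range m, r^i * (y (i+1) - y (i+2))^2 :=
    Finset.sum_nonneg (fun i _ => by positivity)
  have partC : 0 ≤ r^m * (y (m+1) * y (m+1)) :=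
    mul_nonneg (pow_nonneg hr.le m) (mul_self_nonneg _)
  have eA : y 1 = 0 := by
    have : Q * (y 1 * y 1) = 0 := le_antisymm (by linarith) partA
    have h2 : y 1 * y 1 = 0 := by
      rcases mul_eq_zero.1 this with h | h
      · exact absurd h hQ.ne'
      · exact h
    exact mul_self_eq_zero.1 h2
  have eC : y (m+1) = 0 := by
    have : r^m * (y (m+1) * y (m+1)) = 0 := le_antisymm (by linarith) partC
    have h2 : y (m+1) * y (m+1) = 0 := by
      rcases mul_eq_zero.1 this with h | h
      · exact absurd h (pow_pos hr m).ne'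
      · exact h
    exact mul_self_eq_zero.1 h2
  have eB : ∀ i ∈ Finset.range m, y (i+1) = y (i+2) := by
    have hs : ∑ i ∈ Finset.range m, r^i * (y (i+1) - y (i+2))^2 = 0 :=
      le_antisymm (by linarith) partB
    intro i hi
    have := (Finset.sum_eq_zero_iff_of_nonneg (fun i _ => by positivity)).1 hs i hi
    have h2 : (y (i+1) - y (i+2))^2 = 0 := by
      rcases mul_eq_zero.1 this with h | h
      · exact absurd h (pow_pos hr i).ne'
      · exact h
    have := pow_eq_zero_iff (n := 2) (by norm_num) |>.1 h2
    linarith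
  have hyzero : ∀ j, j ≤ m → y (j+1) = 0 := by
    intro j
    induction j with
    | zero => intro _; exact eA
    | succ j ih =>
      intro hj
      have := eB j (Finset.mem_range.2 (by omega))
      rw [← this]
      exact ih (by omega)
  have hxzero : ∀ k : Fin (m+1), x k = 0 := by
    intro k
    rw [← yext_succ _ x k]
    exact hyzero k.1 (by omega)
  constructor
  · funext i
    have h := hAx i
    rw [Finset.sum_eq_zero (fun k _ => by rw [hxzero k, mul_zero])] at h
    linarith [h.symm]
  · funext k
    have := hxzero k
    simp only [hxdef] at this
    linarith

/-- Membership characterization. -/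
lemma mem_sigma_iff (n : ℕ) (q : ℚ) (J K : Finset (Fin n)) (v : Fin n → ℝ) :
    v ∈ sigmaCone n q J K ↔ ∃ C D : Fin n → ℝ,
      (∀ i, 0 ≤ C i) ∧ (∀ i, 0 ≤ D i) ∧
      (∀ i ∉ J, C i = 0) ∧ (∀ k ∉ K, D k = 0) ∧
      ∀ j, v j = C j - ∑ k, (Aq n q j k : ℝ) * D k := by
  have sum_single : ∀ (c : Fin n → ℝ) (J : Finset (Fin n)) (j : Fin n),
      (∑ i ∈ J, c i • (Pi.single i (1:ℝ) : Fin n → ℝ)) j = if j ∈ J then c j else 0 := by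
    intro c J j
    rw [Finset.sum_apply]
    simp only [Pi.smul_apply, Pi.single_apply, smul_eq_mul, mul_ite, mul_one, mul_zero]
    exact Finset.sum_ite_eq J j c
  have sum_neg : ∀ (d : Fin n → ℝ) (K : Finset (Fin n)) (j : Fin n),
      (∑ k ∈ K, d k • (-(fun i : Fin n => (Aq n q i k : ℝ)) : Fin n → ℝ)) j
        = -∑ k ∈ K, (Aq n q j k : ℝ) * d k := by
    intro d K j
    rw [Finset.sum_apply, ← Finset.sum_neg_distrib]
    exact Finset.sum_congr rfl (fun k _ => by
      simp only [Pi.smul_apply, Pi.neg_apply, smul_eq_mul]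
      ring)
  constructor
  · rintro ⟨c, d, hc, hd, hv⟩
    refine ⟨fun i => if i ∈ J then c i else 0, fun k => if k ∈ K then d k else 0,
      fun i => by dsimp only; split_ifs; exacts [hc i, le_refl 0],
      fun k => by dsimp only; split_ifs; exacts [hd k, le_refl 0],
      fun i hi => by simp [hi], fun k hk => by simp [hk], fun j => ?_⟩
    have hDsum : ∑ k, (Aq n q j k : ℝ) * (if k ∈ K then d k else 0)
        = ∑ k ∈ K, (Aq n q j k : ℝ) * d k := by
      rw [← Finset.sum_subset K.subset_univ
        (fun k _ hk => by rw [if_neg hk, mul_zero])]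
      exact Finset.sum_congr rfl (fun k hk => by rw [if_pos hk])
    rw [hDsum, hv]
    rw [Pi.add_apply, sum_single, sum_neg]
    ring
  · rintro ⟨C, D, hC, hD, hCJ, hDK, hv⟩
    refine ⟨C, D, hC, hD, ?_⟩
    funext j
    rw [Pi.add_apply, sum_single, sum_neg, hv j]
    have hDsum : ∑ k, (Aq n q j k : ℝ) * D k = ∑ k ∈ K, (Aq n q j k : ℝ) * D k := by
      rw [← Finset.sum_subset K.subset_univ
        (fun k _ hk => by rw [hDK k hk, mul_zero])]
    have hCj : (if j ∈ J then C j else 0) = C j := by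
      split_ifs with h
      · rfl
      · exact (hCJ j h).symm
    rw [hCj, hDsum]
    ring

theorem sigmaCone_inter (n : ℕ) (q : ℚ) (hn : 1 ≤ n) (hq : 0 < q)
    (J K P Q : Finset (Fin n)) (hJK : Disjoint J K) (hPQ : Disjoint P Q) :
    sigmaCone n q J K ∩ sigmaCone n q P Q = sigmaCone n q (J ∩ P) (K ∩ Q) := by
  ext v
  simp only [Set.mem_inter_iff, mem_sigma_iff]
  constructor
  · rintro ⟨⟨C, D, hC, hD, hCJ, hDK, hv⟩, ⟨C', D', hC', hD', hCP, hDQ, hv'⟩⟩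
    have hcomp : ∀ i, C i * D i = 0 := by
      intro i
      by_cases h : i ∈ J
      · rw [hDK i (Finset.disjoint_left.1 hJK h), mul_zero]
      · rw [hCJ i h, zero_mul]
    have hcomp' : ∀ i, C' i * D' i = 0 := by
      intro i
      by_cases h : i ∈ P
      · rw [hDQ i (Finset.disjoint_left.1 hPQ h), mul_zero]
      · rw [hCP i h, zero_mul]
    have heq : ∀ j, C j - ∑ k, (Aq n q j k : ℝ) * D k
        = C' j - ∑ k, (Aq n q j k : ℝ) * D' k := by
      intro j; rw [← hv j, ← hv' j]
    obtain ⟨hCC, hDD⟩ := uniq n hn q hq C D C' D' hC hD hC' hD' hcomp hcomp' heq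
    refine ⟨C, D, hC, hD, fun i hi => ?_, fun k hk => ?_, hv⟩
    · have h' : ¬(i ∈ J ∧ i ∈ P) := by simpa [Finset.mem_inter] using hi
      rcases not_and_or.1 h' with h | h
      · exact hCJ i h
      · rw [hCC]; exact hCP i h
    · have h' : ¬(k ∈ K ∧ k ∈ Q) := by simpa [Finset.mem_inter] using hk
      rcases not_and_or.1 h' with h | h
      · exact hDK k h
      · rw [hDD]; exact hDQ k h
  · rintro ⟨C, D, hC, hD, hCJP, hDKQ, hv⟩
    exact ⟨⟨C, D, hC, hD,
        fun i hi => hCJP i (fun h => hi (Finset.mem_inter.1 h).1),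
        fun k hk => hDKQ k (fun h => hk (Finset.mem_inter.1 h).1), hv⟩,
      ⟨C, D, hC, hD,
        fun i hi => hCJP i (fun h => hi (Finset.mem_inter.1 h).2),
        fun k hk => hDKQ k (fun h => hk (Finset.mem_inter.1 h).2), hv⟩⟩
end
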